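/- arXiv:1902.08162 — 8 statements merged into one kernel-verified Lean document; each statement's English description precedes it below -/
import Mathlib

section
/- For every t with -1 < t < 1, the Cauchy principal value integral of sqrt(1-x^2)/(x-t) over x in (-1,1) equals -π t. -/
open MeasureTheory Filter Set

/-- Cauchy principal value integral of `sqrt (1 - x^2) / (x - t)` over `(-1,1)`
equals `-π t` for `-1 < t < 1`. -/
theorem pv_sqrt_one_sub_sq_div (t : ℝ) (ht : -1 < t) (ht1 : t < 1) :
    Tendsto
      (fun ε : ℝ =>
        ∫ x in Set.Ioo (-1 : ℝ) 1 \ Set.Ioo (t - ε) (t + ε),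
          Real.sqrt (1 - x ^ 2) / (x - t))
      (nhdsWithin 0 (Set.Ioi 0)) (nhds (-Real.pi * t)) := by
  have ht2 : 0 < 1 - t ^ 2 := by nlinarith
  set s : ℝ := Real.sqrt (1 - t ^ 2) with hs_def
  have hs : 0 < s := Real.sqrt_pos.2 ht2
  have hs2 : s ^ 2 = 1 - t ^ 2 := Real.sq_sqrt ht2.le
  set N : ℝ → ℝ := fun x => 1 - t * x + s * Real.sqrt (1 - x ^ 2) with hN_def
  set G : ℝ → ℝ := fun x =>
    Real.sqrt (1 - x ^ 2) - t * Real.arcsin x - s * Real.log (N x) with hG_def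
  set F : ℝ → ℝ := fun x => G x + s * Real.log (x - t) with hF_def
  -- positivity of N on [-1,1]
  have hN : ∀ x : ℝ, -1 ≤ x → x ≤ 1 → 0 < N x := by
    intro x hx1 hx2
    have h1 : t * x < 1 := by nlinarith [sq_nonneg (t - x)]
    have h2 : 0 ≤ s * Real.sqrt (1 - x ^ 2) :=
      mul_nonneg hs.le (Real.sqrt_nonneg _)
    simp only [hN_def]; linarith
  have hNcont : Continuous N := by
    simp only [hN_def]
    exact (continuous_const.sub (continuous_const.mul continuous_id)).add
      (continuous_const.mul (Real.continuous_sqrt.comp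
        (continuous_const.sub (continuous_pow 2))))
  -- continuity of G on Icc (-1) 1
  have hGc : ContinuousOn G (Set.Icc (-1 : ℝ) 1) := by
    apply ContinuousOn.sub
    · apply ContinuousOn.sub
      · exact (Real.continuous_sqrt.comp
          (continuous_const.sub (continuous_pow 2))).continuousOn
      · exact (continuous_const.mul Real.continuous_arcsin).continuousOn
    · exact continuousOn_const.mul
        (ContinuousOn.log hNcont.continuousOn
          (fun x hx => (hN x hx.1 hx.2).ne'))
  -- derivative of F
  have hFd : ∀ x : ℝ, -1 < x → x < 1 → x ≠ t →
      HasDerivAt F (Real.sqrt (1 - x ^ 2) / (x - t)) x := by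
    intro x hx1 hx2 hxt
    have hx2' : 0 < 1 - x ^ 2 := by nlinarith
    set y : ℝ := Real.sqrt (1 - x ^ 2) with hy_def
    have hy : 0 < y := Real.sqrt_pos.2 hx2'
    have hy2 : y ^ 2 = 1 - x ^ 2 := Real.sq_sqrt hx2'.le
    have d1 : HasDerivAt (fun x : ℝ => Real.sqrt (1 - x ^ 2)) (-x / y) x := by
      have h0 : HasDerivAt (fun x : ℝ => 1 - x ^ 2) (-(2 * x)) x := by
        simpa using ((hasDerivAt_pow 2 x).const_sub 1)
      have := (Real.hasDerivAt_sqrt hx2'.ne').comp x h0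
      refine this.congr_deriv ?_
      rw [← hy_def]
      field_simp
    have d2 : HasDerivAt (fun x : ℝ => t * Real.arcsin x) (t * (1 / y)) x :=
      (Real.hasDerivAt_arcsin (by linarith) (by linarith)).const_mul t
    have d3 : HasDerivAt N (-t + s * (-x / y)) x := by
      have h0 : HasDerivAt (fun x : ℝ => 1 - t * x) (-t) x := by
        simpa using ((hasDerivAt_id x).const_mul t).const_sub 1
      exact h0.add (d1.const_mul s)
    have hNx : N x ≠ 0 := (hN x hx1.le hx2.le).ne'
    have d4 : HasDerivAt (fun x : ℝ => s * Real.log (N x))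
        (s * ((-t + s * (-x / y)) / N x)) x := (d3.log hNx).const_mul s
    have d5 : HasDerivAt (fun x : ℝ => s * Real.log (x - t))
        (s * (1 / (x - t))) x := by
      have h0 : HasDerivAt (fun x : ℝ => x - t) 1 x := (hasDerivAt_id x).sub_const t
      simpa using (h0.log (sub_ne_zero.2 hxt)).const_mul s
    have hF : HasDerivAt F
        (-x / y - t * (1 / y) - s * ((-t + s * (-x / y)) / N x) + s * (1 / (x - t))) x :=
      ((d1.sub d2).sub d4).add d5
    have hxt' : x - t ≠ 0 := sub_ne_zero.2 hxt
    have hNxy : N x = 1 - t * x + s * y := rfl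
    have hNx' : (1 : ℝ) - t * x + s * y ≠ 0 := hNxy ▸ hNx
    convert hF using 1
    rw [hNxy]
    have hy0 : y ≠ 0 := hy.ne'
    rw [← sub_eq_zero]
    have hP : y / (x - t) - (-x / y - t * (1 / y) - s * ((-t + s * (-x / y)) / (1 - t * x + s * y)) + s * (1 / (x - t))) = (y ^ 2 * (1 - t * x + s * y) + (x ^ 2 - t ^ 2) * (1 - t * x + s * y) - s * (t * y + s * x) * (x - t) - s * y * (1 - t * x + s * y)) / (y * (1 - t * x + s * y) * (x - t)) := by
      generalize hM : (1 : ℝ) - t * x + s * y = M at *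
      field_simp
      ring
    rw [hP, div_eq_zero_iff]
    left
    linear_combination ((1 - t * x + s * y) - s ^ 2) * hy2 + (s * y - (1 - t * x + s * y)) * hs2
  -- integrand continuity
  have hcont : ∀ a b : ℝ, (∀ x : ℝ, a ≤ x → x ≤ b → x ≠ t) →
      ContinuousOn (fun x => Real.sqrt (1 - x ^ 2) / (x - t)) (Set.Icc a b) := by
    intro a b hab
    apply ContinuousOn.div
    · exact (Real.continuous_sqrt.comp
        (continuous_const.sub (continuous_pow 2))).continuousOn
    · exact (continuous_id.sub continuous_const).continuousOn
    · intro x hx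
      exact sub_ne_zero.2 (hab x hx.1 hx.2)
  -- main computation for small ε
  have key : ∀ ε : ℝ, 0 < ε → ε < 1 + t → ε < 1 - t →
      (∫ x in Set.Ioo (-1 : ℝ) 1 \ Set.Ioo (t - ε) (t + ε),
        Real.sqrt (1 - x ^ 2) / (x - t)) = G (t - ε) - G (t + ε) - Real.pi * t := by
    intro ε hε hε1 hε2
    have h1 : (-1 : ℝ) < t - ε := by linarith
    have h2 : t + ε < 1 := by linarith
    have hset : Set.Ioo (-1 : ℝ) 1 \ Set.Ioo (t - ε) (t + ε) =
        Set.Ioc (-1 : ℝ) (t - ε) ∪ Set.Ico (t + ε) 1 := by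
      ext x
      simp only [Set.mem_diff, Set.mem_Ioo, Set.mem_union, Set.mem_Ioc, Set.mem_Ico,
        not_and, not_lt]
      constructor
      · rintro ⟨⟨ha, hb⟩, hc⟩
        rcases le_or_gt x (t - ε) with h | h
        · exact Or.inl ⟨ha, h⟩
        · exact Or.inr ⟨hc h, hb⟩
      · rintro (⟨ha, hb⟩ | ⟨ha, hb⟩)
        · exact ⟨⟨ha, by linarith⟩, fun h => by linarith⟩
        · exact ⟨⟨by linarith, hb⟩, fun h => by linarith⟩
    have hc1 : ContinuousOn (fun x => Real.sqrt (1 - x ^ 2) / (x - t))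
        (Set.Icc (-1 : ℝ) (t - ε)) :=
      hcont _ _ (fun x _ hx2 => by intro h; rw [h] at hx2; linarith)
    have hc2 : ContinuousOn (fun x => Real.sqrt (1 - x ^ 2) / (x - t))
        (Set.Icc (t + ε) (1 : ℝ)) :=
      hcont _ _ (fun x hx1 _ => by intro h; rw [h] at hx1; linarith)
    -- FTC on the left piece
    have hI1 : (∫ x in (-1 : ℝ)..(t - ε), Real.sqrt (1 - x ^ 2) / (x - t)) =
        F (t - ε) - F (-1) := by
      apply intervalIntegral.integral_eq_sub_of_hasDerivAt_of_le h1.le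
      · apply ContinuousOn.add
        · exact hGc.mono (Set.Icc_subset_Icc le_rfl (by linarith))
        · exact continuousOn_const.mul (ContinuousOn.log
            ((continuous_id.sub continuous_const).continuousOn)
            (fun x hx => sub_ne_zero.2 (by intro h; rw [h] at hx; linarith [hx.2])))
      · intro x hx
        exact hFd x hx.1 (by linarith [hx.2]) (by intro h; rw [h] at hx; linarith [hx.2])
      · exact hc1.intervalIntegrable_of_Icc h1.le
    -- FTC on the right piece
    have hI2 : (∫ x in (t + ε)..(1 : ℝ), Real.sqrt (1 - x ^ 2) / (x - t)) =
        F 1 - F (t + ε) := by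
      apply intervalIntegral.integral_eq_sub_of_hasDerivAt_of_le h2.le
      · apply ContinuousOn.add
        · exact hGc.mono (Set.Icc_subset_Icc (by linarith) le_rfl)
        · exact continuousOn_const.mul (ContinuousOn.log
            ((continuous_id.sub continuous_const).continuousOn)
            (fun x hx => sub_ne_zero.2 (by intro h; rw [h] at hx; linarith [hx.1])))
      · intro x hx
        exact hFd x (by linarith [hx.1]) hx.2 (by intro h; rw [h] at hx; linarith [hx.1])
      · exact hc2.intervalIntegrable_of_Icc h2.le
    have hint1 : MeasureTheory.IntegrableOn (fun x => Real.sqrt (1 - x ^ 2) / (x - t))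
        (Set.Ioc (-1 : ℝ) (t - ε)) volume :=
      (hc1.integrableOn_compact isCompact_Icc).mono_set Set.Ioc_subset_Icc_self
    have hint2 : MeasureTheory.IntegrableOn (fun x => Real.sqrt (1 - x ^ 2) / (x - t))
        (Set.Ico (t + ε) (1 : ℝ)) volume :=
      (hc2.integrableOn_compact isCompact_Icc).mono_set Set.Ico_subset_Icc_self
    rw [hset, MeasureTheory.setIntegral_union (by
        rw [Set.disjoint_left]; intro x hx hx'; linarith [hx.2, hx'.1])
      measurableSet_Ico hint1 hint2]
    have e1 : (∫ x in Set.Ioc (-1 : ℝ) (t - ε), Real.sqrt (1 - x ^ 2) / (x - t)) =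
        F (t - ε) - F (-1) := by
      rw [← hI1, intervalIntegral.integral_of_le h1.le]
    have e2 : (∫ x in Set.Ico (t + ε) (1 : ℝ), Real.sqrt (1 - x ^ 2) / (x - t)) =
        F 1 - F (t + ε) := by
      rw [← hI2, intervalIntegral.integral_of_le h2.le,
        MeasureTheory.integral_Ioc_eq_integral_Ioo,
        MeasureTheory.integral_Ico_eq_integral_Ioo]
    rw [e1, e2]
    -- compute F at the endpoints
    have hFm1 : F (-1) = t * Real.pi / 2 := by
      simp only [hF_def, hG_def, hN_def]
      have : (1 : ℝ) - (-1 : ℝ) ^ 2 = 0 := by ring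
      rw [this, Real.sqrt_zero, Real.arcsin_neg_one]
      have : (-1 : ℝ) - t = -(1 + t) := by ring
      rw [this, Real.log_neg_eq_log]
      have : (1 : ℝ) - t * (-1) + s * 0 = 1 + t := by ring
      rw [this]
      ring
    have hF1 : F 1 = -(t * Real.pi / 2) := by
      simp only [hF_def, hG_def, hN_def]
      have : (1 : ℝ) - (1 : ℝ) ^ 2 = 0 := by ring
      rw [this, Real.sqrt_zero, Real.arcsin_one]
      have : (1 : ℝ) - t * 1 + s * 0 = 1 - t := by ring
      rw [this]
      ring
    have hFtm : F (t - ε) = G (t - ε) + s * Real.log ε := by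
      simp only [hF_def]
      have : t - ε - t = -ε := by ring
      rw [this, Real.log_neg_eq_log]
    have hFtp : F (t + ε) = G (t + ε) + s * Real.log ε := by
      simp only [hF_def]
      have : t + ε - t = ε := by ring
      rw [this]
    rw [hFm1, hF1, hFtm, hFtp]
    ring
  -- the limit
  have hGt : ContinuousAt G t :=
    hGc.continuousAt (Icc_mem_nhds ht ht1)
  have hδ : 0 < min (1 + t) (1 - t) := lt_min (by linarith) (by linarith)
  have h1 : Tendsto (fun ε : ℝ => t - ε) (nhdsWithin 0 (Set.Ioi 0)) (nhds t) := by
    have : Tendsto (fun ε : ℝ => t - ε) (nhds 0) (nhds (t - 0)) :=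
      tendsto_const_nhds.sub tendsto_id
    simpa using this.mono_left nhdsWithin_le_nhds
  have h2 : Tendsto (fun ε : ℝ => t + ε) (nhdsWithin 0 (Set.Ioi 0)) (nhds t) := by
    have : Tendsto (fun ε : ℝ => t + ε) (nhds 0) (nhds (t + 0)) :=
      tendsto_const_nhds.add tendsto_id
    simpa using this.mono_left nhdsWithin_le_nhds
  have hT : Tendsto (fun ε : ℝ => G (t - ε) - G (t + ε) - Real.pi * t)
      (nhdsWithin 0 (Set.Ioi 0)) (nhds (-Real.pi * t)) := by
    have := ((hGt.tendsto.comp h1).sub (hGt.tendsto.comp h2)).sub_const (Real.pi * t)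
    simpa using this
  apply hT.congr'
  filter_upwards [Ioo_mem_nhdsGT hδ] with ε hε
  exact (key ε hε.1 (lt_of_lt_of_le hε.2 (min_le_left _ _))
    (lt_of_lt_of_le hε.2 (min_le_right _ _))).symm
end

section
/- For every t with -1 < t < 1, the Cauchy principal value integral of 1/((x-t) sqrt(1-x^2)) over x in (-1,1) equals 0. -/
open MeasureTheory Filter Set


noncomputable def Dd (t x : ℝ) : ℝ := 1 - t*x + Real.sqrt (1-t^2) * Real.sqrt (1-x^2)
noncomputable def Ff (t x : ℝ) : ℝ := (1 / Real.sqrt (1-t^2)) * Real.log ((x - t) / Dd t x)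

lemma Dd_pos {t x : ℝ} (ht : -1 < t) (ht1 : t < 1) (hx : -1 ≤ x) (hx1 : x ≤ 1) :
    0 < Dd t x := by
  have h0 : |t*x| < 1 := by
    rw [abs_mul]
    calc |t| * |x| ≤ |t| * 1 := by
          exact mul_le_mul_of_nonneg_left (abs_le.2 ⟨hx, hx1⟩) (abs_nonneg t)
      _ < 1 := by rw [mul_one]; exact abs_lt.2 ⟨ht, ht1⟩
  have h1 : 0 < 1 - t*x := by
    have := (abs_lt.1 h0).2; linarith
  have h2 : (0:ℝ) ≤ Real.sqrt (1-t^2) * Real.sqrt (1-x^2) :=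
    mul_nonneg (Real.sqrt_nonneg _) (Real.sqrt_nonneg _)
  unfold Dd; linarith

lemma Ff_hasDeriv {t x : ℝ} (ht : -1 < t) (ht1 : t < 1) (hx : -1 < x) (hx1 : x < 1)
    (hxt : x ≠ t) :
    HasDerivAt (Ff t) (1 / ((x - t) * Real.sqrt (1 - x ^ 2))) x := by
  have hx2 : (0:ℝ) < 1 - x^2 := by nlinarith
  have ht2 : (0:ℝ) < 1 - t^2 := by nlinarith
  set σ := Real.sqrt (1 - x^2) with hσdef
  set s := Real.sqrt (1 - t^2) with hsdef
  have hσ : 0 < σ := Real.sqrt_pos.2 hx2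
  have hs : 0 < s := Real.sqrt_pos.2 ht2
  have hσ2 : σ^2 = 1 - x^2 := Real.sq_sqrt hx2.le
  have hs2 : s^2 = 1 - t^2 := Real.sq_sqrt ht2.le
  have hD : 0 < Dd t x := Dd_pos ht ht1 hx.le hx1.le
  have hxt' : x - t ≠ 0 := sub_ne_zero.2 hxt
  have h1 : HasDerivAt (fun y : ℝ => 1 - y^2) (-(2*x)) x := by
    simpa using ((hasDerivAt_pow 2 x).const_sub 1)
  have hsq : HasDerivAt (fun y : ℝ => Real.sqrt (1 - y^2)) (-(2*x)/(2*σ)) x :=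
    h1.sqrt (by positivity)
  have hDd : HasDerivAt (fun y => Dd t y) (-t + s * (-(2*x)/(2*σ))) x := by
    have hlin : HasDerivAt (fun y : ℝ => 1 - t*y) (-t) x := by
      simpa using ((hasDerivAt_id x).const_mul t).const_sub 1
    exact hlin.add (hsq.const_mul s)
  have hnum : HasDerivAt (fun y : ℝ => y - t) 1 x := (hasDerivAt_id x).sub_const t
  have hg : HasDerivAt (fun y => (y - t) / Dd t y)
      ((1 * Dd t x - (x - t) * (-t + s * (-(2*x)/(2*σ)))) / (Dd t x)^2) x :=
    hnum.div hDd hD.ne'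
  have hgx : (x - t) / Dd t x ≠ 0 := div_ne_zero hxt' hD.ne'
  have hF := (hg.log hgx).const_mul (1 / s)
  have hDval : Dd t x = 1 - t*x + s*σ := rfl
  have hN : 1 * Dd t x - (x - t) * (-t + s * (-(2*x)/(2*σ))) = s * Dd t x / σ := by
    have hq : -(2*x)/(2*σ) * σ = -x := by
      rw [div_mul_eq_mul_div, div_eq_iff (by positivity)]; ring
    rw [hDval, eq_div_iff hσ.ne']
    linear_combination (-(x-t)*s) * hq + (-σ) * hs2 + s * hσ2
  refine hF.congr_deriv ?_
  rw [hN]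
  field_simp


lemma Ff_contOn {t : ℝ} (ht : -1 < t) (ht1 : t < 1) :
    ContinuousOn (Ff t) {x | x ∈ Icc (-1:ℝ) 1 ∧ x ≠ t} := by
  have hD : Continuous (fun x => Dd t x) := by
    unfold Dd; fun_prop
  apply ContinuousOn.mul continuousOn_const
  apply ContinuousOn.log
  · exact ((continuous_id.sub continuous_const).continuousOn).div hD.continuousOn
      (fun x hx => (Dd_pos ht ht1 hx.1.1 hx.1.2).ne')
  · intro x hx
    exact div_ne_zero (sub_ne_zero.2 hx.2) (Dd_pos ht ht1 hx.1.1 hx.1.2).ne'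

lemma f_meas (t : ℝ) : Measurable (fun x : ℝ => 1 / ((x - t) * Real.sqrt (1 - x ^ 2))) := by
  simp only [one_div]
  exact ((measurable_id.sub_const t).mul
    (Real.continuous_sqrt.measurable.comp (measurable_const.sub (measurable_id.pow_const 2)))).inv

lemma int_left {t c : ℝ} (hc : -1 < c) (hct : c < t) (ht1 : t < 1) :
    IntegrableOn (fun x => 1 / ((x - t) * Real.sqrt (1 - x ^ 2))) (Ioc (-1) c) := by
  have h1c : (0:ℝ) < 1 - c := by linarith
  have hmaj : IntegrableOn (fun x : ℝ => (1/((t-c)*Real.sqrt (1-c))) * (x+1) ^ (-(1/2) : ℝ))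
      (Ioc (-1) c) := by
    have h1 : IntervalIntegrable (fun x : ℝ => x ^ (-(1/2) : ℝ)) volume 0 (c+1) :=
      intervalIntegral.intervalIntegrable_rpow' (by norm_num)
    have h2 := h1.comp_add_right 1
    norm_num at h2
    exact ((intervalIntegrable_iff_integrableOn_Ioc_of_le (by linarith)).1
      (h2.const_mul _))
  apply hmaj.mono' ((f_meas t).aestronglyMeasurable.restrict)
  filter_upwards [ae_restrict_mem measurableSet_Ioc] with x hx
  obtain ⟨hx1, hx2⟩ := hx
  have hx1' : (0:ℝ) < 1 + x := by linarith
  have hxt : x - t < 0 := by linarith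
  have hsx : 0 < Real.sqrt (1+x) := Real.sqrt_pos.2 hx1'
  have hsxx : 0 < Real.sqrt (1-x) := Real.sqrt_pos.2 (by linarith)
  have hsc : 0 < Real.sqrt (1-c) := Real.sqrt_pos.2 h1c
  have hsp : Real.sqrt (1 - x^2) = Real.sqrt (1-x) * Real.sqrt (1+x) := by
    rw [← Real.sqrt_mul (by linarith)]; ring_nf
  have hs1 : Real.sqrt (1-c) ≤ Real.sqrt (1-x) := Real.sqrt_le_sqrt (by linarith)
  have hrpow : ((x+1) : ℝ) ^ (-(1/2) : ℝ) = 1 / Real.sqrt (1+x) := by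
    rw [Real.rpow_neg (by linarith), Real.sqrt_eq_rpow, one_div]
    norm_num [add_comm x 1]
  have hlhs : ‖1 / ((x - t) * Real.sqrt (1 - x ^ 2))‖
      = 1 / ((t-x) * Real.sqrt (1-x) * Real.sqrt (1+x)) := by
    rw [Real.norm_eq_abs, abs_div, abs_one, abs_mul, abs_of_neg hxt, hsp,
      abs_of_pos (by positivity), mul_assoc]
    ring_nf
  rw [hlhs, hrpow, one_div_mul_one_div]
  apply one_div_le_one_div_of_le
    (by have h : (0:ℝ) < t - c := by linarith
        positivity)
  apply mul_le_mul_of_nonneg_right _ hsx.le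
  exact mul_le_mul (by linarith) hs1 hsc.le (by linarith)

lemma int_right {t c : ℝ} (hc : c < 1) (hct : t < c) (ht1 : -1 < t) :
    IntegrableOn (fun x => 1 / ((x - t) * Real.sqrt (1 - x ^ 2))) (Ico c 1) := by
  have h1c : (0:ℝ) < 1 + c := by linarith
  have hmaj : IntegrableOn (fun x : ℝ => (1/((c-t)*Real.sqrt (1+c))) * (1-x) ^ (-(1/2) : ℝ))
      (Ico c 1) := by
    have h1 : IntervalIntegrable (fun x : ℝ => x ^ (-(1/2) : ℝ)) volume 0 (1-c) :=
      intervalIntegral.intervalIntegrable_rpow' (by norm_num)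
    have h2 := h1.comp_sub_left 1
    norm_num at h2
    exact ((intervalIntegrable_iff_integrableOn_Ico_of_le (by linarith)).1
      (h2.symm.const_mul _))
  apply hmaj.mono' ((f_meas t).aestronglyMeasurable.restrict)
  filter_upwards [ae_restrict_mem measurableSet_Ico] with x hx
  obtain ⟨hx1, hx2⟩ := hx
  have hx1' : (0:ℝ) < 1 - x := by linarith
  have hxt : 0 < x - t := by linarith
  have hsx : 0 < Real.sqrt (1-x) := Real.sqrt_pos.2 hx1'
  have hsxx : 0 < Real.sqrt (1+x) := Real.sqrt_pos.2 (by linarith)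
  have hsc : 0 < Real.sqrt (1+c) := Real.sqrt_pos.2 h1c
  have hsp : Real.sqrt (1 - x^2) = Real.sqrt (1+x) * Real.sqrt (1-x) := by
    rw [← Real.sqrt_mul (by linarith)]; ring_nf
  have hs1 : Real.sqrt (1+c) ≤ Real.sqrt (1+x) := Real.sqrt_le_sqrt (by linarith)
  have hrpow : ((1-x) : ℝ) ^ (-(1/2) : ℝ) = 1 / Real.sqrt (1-x) := by
    rw [Real.rpow_neg (by linarith), Real.sqrt_eq_rpow, one_div]
    exact (one_div _).symm
  have hlhs : ‖1 / ((x - t) * Real.sqrt (1 - x ^ 2))‖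
      = 1 / ((x-t) * Real.sqrt (1+x) * Real.sqrt (1-x)) := by
    rw [Real.norm_eq_abs, abs_div, abs_one, abs_mul, abs_of_pos hxt, hsp,
      abs_of_pos (by positivity), mul_assoc]
  rw [hlhs, hrpow, one_div_mul_one_div]
  apply one_div_le_one_div_of_le
    (by have h : (0:ℝ) < c - t := by linarith
        positivity)
  apply mul_le_mul_of_nonneg_right _ hsx.le
  exact mul_le_mul (by linarith) hs1 hsc.le (by linarith)

lemma integral_left {t c : ℝ} (ht : -1 < t) (ht1 : t < 1) (hc : -1 < c) (hct : c < t) :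
    ∫ x in Ioc (-1:ℝ) c, 1 / ((x - t) * Real.sqrt (1 - x ^ 2)) = Ff t c - Ff t (-1) := by
  rw [← intervalIntegral.integral_of_le (by linarith : (-1:ℝ) ≤ c)]
  apply intervalIntegral.integral_eq_sub_of_hasDeriv_right_of_le (by linarith)
  · exact (Ff_contOn ht ht1).mono (fun x hx =>
      ⟨⟨hx.1, by rcases hx with ⟨h1, h2⟩; linarith⟩, by rcases hx with ⟨h1, h2⟩; intro h; linarith [h ▸ h2]⟩)
  · intro x hx
    exact (Ff_hasDeriv ht ht1 (by linarith [hx.1]) (by linarith [hx.2])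
      (by intro h; linarith [h ▸ hx.2])).hasDerivWithinAt
  · exact (intervalIntegrable_iff_integrableOn_Ioc_of_le (by linarith)).2 (int_left hc hct ht1)

lemma integral_right {t c : ℝ} (ht : -1 < t) (ht1 : t < 1) (hc : c < 1) (hct : t < c) :
    ∫ x in Ico c (1:ℝ), 1 / ((x - t) * Real.sqrt (1 - x ^ 2)) = Ff t 1 - Ff t c := by
  rw [integral_Ico_eq_integral_Ioo, ← integral_Ioc_eq_integral_Ioo,
    ← intervalIntegral.integral_of_le (by linarith : c ≤ (1:ℝ))]
  apply intervalIntegral.integral_eq_sub_of_hasDeriv_right_of_le (by linarith)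
  · exact (Ff_contOn ht ht1).mono (fun x hx =>
      ⟨⟨by rcases hx with ⟨h1, h2⟩; linarith, hx.2⟩, by rcases hx with ⟨h1, h2⟩; intro h; linarith [h ▸ h1]⟩)
  · intro x hx
    exact (Ff_hasDeriv ht ht1 (by linarith [hx.1]) (by linarith [hx.2])
      (by intro h; linarith [h ▸ hx.1])).hasDerivWithinAt
  · exact (intervalIntegrable_iff_integrableOn_Ico_of_le (by linarith)).2 (int_right hc hct ht)

lemma Ff_neg_one {t : ℝ} (ht : -1 < t) : Ff t (-1) = 0 := by
  have h : Dd t (-1) = 1 + t := by unfold Dd; norm_num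
  have hne : (1:ℝ) + t ≠ 0 := by linarith
  have h2 : ((-1:ℝ) - t) / Dd t (-1) = -1 := by
    rw [h]; field_simp; ring
  unfold Ff
  rw [h2, show (-1:ℝ) = -(1:ℝ) from rfl, Real.log_neg_eq_log, Real.log_one, mul_zero]

lemma Ff_one {t : ℝ} (ht1 : t < 1) : Ff t 1 = 0 := by
  have h : Dd t 1 = 1 - t := by unfold Dd; norm_num
  have h2 : ((1:ℝ) - t) / Dd t 1 = 1 := by
    rw [h]; exact div_self (by linarith)
  unfold Ff
  rw [h2, Real.log_one, mul_zero]

lemma Ff_right {t ε : ℝ} (ht : -1 < t) (ht1 : t < 1) (hε : 0 < ε) (h2 : t + ε < 1) :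
    Ff t (t + ε) = (1 / Real.sqrt (1-t^2)) * (Real.log ε - Real.log (Dd t (t+ε))) := by
  have hD : 0 < Dd t (t+ε) := Dd_pos ht ht1 (by linarith) (by linarith)
  unfold Ff
  rw [show t + ε - t = ε by ring, Real.log_div hε.ne' hD.ne']

lemma Ff_left {t ε : ℝ} (ht : -1 < t) (ht1 : t < 1) (hε : 0 < ε) (h1 : -1 < t - ε) :
    Ff t (t - ε) = (1 / Real.sqrt (1-t^2)) * (Real.log ε - Real.log (Dd t (t-ε))) := by
  have hD : 0 < Dd t (t-ε) := Dd_pos ht ht1 (by linarith) (by linarith)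
  unfold Ff
  rw [show t - ε - t = -ε by ring, show -ε / Dd t (t-ε) = -(ε / Dd t (t-ε)) by ring,
    Real.log_neg_eq_log, Real.log_div hε.ne' hD.ne']

/-- Cauchy principal value integral of `1 / ((x - t) * sqrt (1 - x^2))` over `(-1,1)`
equals `0` for `-1 < t < 1`. -/
theorem pv_inv_sqrt_one_sub_sq (t : ℝ) (ht : -1 < t) (ht1 : t < 1) :
    Tendsto
      (fun ε : ℝ =>
        ∫ x in Set.Ioo (-1 : ℝ) 1 \ Set.Ioo (t - ε) (t + ε),
          1 / ((x - t) * Real.sqrt (1 - x ^ 2)))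
      (nhdsWithin 0 (Set.Ioi 0)) (nhds 0) := by
  have ht2 : (0:ℝ) < 1 - t^2 := by nlinarith
  have hs : 0 < Real.sqrt (1 - t^2) := Real.sqrt_pos.2 ht2
  have hδ : 0 < min (1+t) (1-t) := lt_min (by linarith) (by linarith)
  have hDt : 0 < Dd t t := Dd_pos ht ht1 ht.le ht1.le
  have hDcont : Continuous (fun x : ℝ => Dd t x) := by
    unfold Dd; fun_prop
  have key : ∀ ε ∈ Ioo (0:ℝ) (min (1+t) (1-t)),
      (∫ x in Set.Ioo (-1 : ℝ) 1 \ Set.Ioo (t - ε) (t + ε),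
          1 / ((x - t) * Real.sqrt (1 - x ^ 2)))
        = (1 / Real.sqrt (1-t^2)) * (Real.log (Dd t (t+ε)) - Real.log (Dd t (t-ε))) := by
    rintro ε ⟨hε, hεδ⟩
    have hδ1 := lt_min_iff.1 hεδ
    have h1 : -1 < t - ε := by linarith [hδ1.1]
    have h2 : t + ε < 1 := by linarith [hδ1.2]
    have hset : Set.Ioo (-1:ℝ) 1 \ Set.Ioo (t-ε) (t+ε) = Ioc (-1) (t-ε) ∪ Ico (t+ε) 1 := by
      ext x
      simp only [mem_diff, mem_Ioo, mem_union, mem_Ioc, mem_Ico, not_and, not_lt]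
      constructor
      · rintro ⟨⟨a, b⟩, h⟩
        rcases le_or_gt x (t-ε) with h' | h'
        · exact Or.inl ⟨a, h'⟩
        · exact Or.inr ⟨h h', b⟩
      · rintro (⟨a, b⟩ | ⟨a, b⟩)
        · exact ⟨⟨a, by linarith⟩, fun h => by linarith⟩
        · exact ⟨⟨by linarith, b⟩, fun h => by linarith⟩
    have hdisj : Disjoint (Ioc (-1:ℝ) (t-ε)) (Ico (t+ε) 1) := by
      rw [Set.disjoint_left]
      rintro x ⟨_, hx2⟩ ⟨hx3, _⟩
      linarith
    rw [hset, setIntegral_union hdisj measurableSet_Ico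
      (int_left h1 (by linarith) ht1) (int_right h2 (by linarith) ht),
      integral_left ht ht1 h1 (by linarith), integral_right ht ht1 h2 (by linarith),
      Ff_neg_one ht, Ff_one ht1, Ff_left ht ht1 hε h1, Ff_right ht ht1 hε h2]
    ring
  have hT : Tendsto (fun ε : ℝ => (1 / Real.sqrt (1-t^2)) *
      (Real.log (Dd t (t+ε)) - Real.log (Dd t (t-ε)))) (nhdsWithin 0 (Ioi 0)) (nhds 0) := by
    have hplus : Tendsto (fun ε : ℝ => Real.log (Dd t (t+ε))) (nhds 0) (nhds (Real.log (Dd t t))) := by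
      apply (Real.continuousAt_log hDt.ne').tendsto.comp
      have : Tendsto (fun ε : ℝ => t + ε) (nhds 0) (nhds t) := by
        exact (continuous_const.add continuous_id).tendsto' 0 t (by simp)
      exact (hDcont.tendsto t).comp this
    have hminus : Tendsto (fun ε : ℝ => Real.log (Dd t (t-ε))) (nhds 0) (nhds (Real.log (Dd t t))) := by
      apply (Real.continuousAt_log hDt.ne').tendsto.comp
      have : Tendsto (fun ε : ℝ => t - ε) (nhds 0) (nhds t) := by
        exact (continuous_const.sub continuous_id).tendsto' 0 t (by simp)
      exact (hDcont.tendsto t).comp this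
    have := ((hplus.sub hminus).const_mul (1 / Real.sqrt (1-t^2))).mono_left
      (nhdsWithin_le_nhds (s := Ioi (0:ℝ)))
    simpa using this
  apply hT.congr'
  filter_upwards [Ioo_mem_nhdsGT_of_mem (Set.left_mem_Ico.2 hδ)] with ε hε
  exact (key ε hε).symm
end

section
/- For every t in [-1,1], the integral from t to 1 of sqrt((1-x)/(1+x)) dx equals arccos(t) - sqrt(1-t^2). In particular, taking t = -1, the function x ↦ (1/π) sqrt((1-x)/(1+x)) is a probability density on [-1,1]. -/
open MeasureTheory Filter Set Topology

private lemma sqrt_ratio_eq {x : ℝ} (h1 : -1 < x) (h2 : x < 1) :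
    Real.sqrt ((1 - x) / (1 + x)) = (1 - x) / Real.sqrt (1 - x ^ 2) := by
  have hp : (0:ℝ) < 1 + x := by linarith
  have hm : (0:ℝ) < 1 - x := by linarith
  have hx2 : (0:ℝ) < 1 - x ^ 2 := by nlinarith
  rw [eq_div_iff (Real.sqrt_pos.2 hx2).ne', ← Real.sqrt_mul (div_nonneg hm.le hp.le),
    show (1 - x) / (1 + x) * (1 - x ^ 2) = (1 - x) ^ 2 by field_simp; ring]
  exact Real.sqrt_sq hm.le

private lemma hasDerivAt_F {x : ℝ} (h1 : -1 < x) (h2 : x < 1) :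
    HasDerivAt (fun y : ℝ => Real.sqrt (1 - y ^ 2) - Real.arccos y)
      (Real.sqrt ((1 - x) / (1 + x))) x := by
  have hx2 : (0:ℝ) < 1 - x ^ 2 := by nlinarith
  have hinner : HasDerivAt (fun y : ℝ => 1 - y ^ 2) (-(2 * x ^ 1)) x :=
    (hasDerivAt_pow 2 x).const_sub 1
  have hs : HasDerivAt (fun y : ℝ => Real.sqrt (1 - y ^ 2))
      (1 / (2 * Real.sqrt (1 - x ^ 2)) * (-(2 * x ^ 1))) x :=
    (Real.hasDerivAt_sqrt hx2.ne').comp x hinner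
  have ha : HasDerivAt Real.arccos (-(1 / Real.sqrt (1 - x ^ 2))) x :=
    Real.hasDerivAt_arccos (by linarith) (by linarith)
  have := hs.sub ha
  refine this.congr_deriv ?_
  rw [sqrt_ratio_eq h1 h2]
  have hsq : Real.sqrt (1 - x ^ 2) ≠ 0 := (Real.sqrt_pos.2 hx2).ne'
  field_simp
  ring

private lemma aux (t : ℝ) (ht : -1 < t) (ht1 : t ≤ 1) :
    ∫ x in t..1, Real.sqrt ((1 - x) / (1 + x))
      = Real.arccos t - Real.sqrt (1 - t ^ 2) := by
  have hcontg : ContinuousOn (fun x : ℝ => Real.sqrt ((1 - x) / (1 + x))) (Icc t 1) := by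
    apply Real.continuous_sqrt.comp_continuousOn
    apply ContinuousOn.div (by fun_prop) (by fun_prop)
    intro x hx
    have : (0:ℝ) < 1 + x := by linarith [hx.1]
    exact this.ne'
  have hint : IntervalIntegrable (fun x : ℝ => Real.sqrt ((1 - x) / (1 + x))) volume t 1 :=
    hcontg.intervalIntegrable_of_Icc ht1
  have hcont : ContinuousOn (fun y : ℝ => Real.sqrt (1 - y ^ 2) - Real.arccos y) (Icc t 1) :=
    ((Real.continuous_sqrt.comp (by continuity)).sub Real.continuous_arccos).continuousOn
  have key := intervalIntegral.integral_eq_sub_of_hasDeriv_right_of_le ht1 hcont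
    (fun x hx => (hasDerivAt_F (by linarith [hx.1]) hx.2).hasDerivWithinAt) hint
  rw [key]
  norm_num [Real.arccos_one]

private lemma gint :
    IntervalIntegrable (fun x : ℝ => Real.sqrt ((1 - x) / (1 + x))) volume (-1) 1 := by
  have hb : IntervalIntegrable (fun x : ℝ => Real.sqrt 2 * (x + 1) ^ (-(1/2) : ℝ))
      volume (-1) 1 := by
    have h0 := (intervalIntegral.intervalIntegrable_rpow' (a := 0) (b := 2)
      (r := -(1/2)) (by norm_num)).comp_add_right 1
    norm_num at h0
    exact h0.const_mul _
  refine hb.mono_fun ?_ ?_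
  · exact (Real.continuous_sqrt.measurable.comp ((measurable_const.sub measurable_id).div
      (measurable_const.add measurable_id))).aestronglyMeasurable
  · filter_upwards [ae_restrict_mem measurableSet_uIoc] with x hx
    rw [Set.uIoc_of_le (by norm_num : (-1:ℝ) ≤ 1)] at hx
    have hp : (0:ℝ) < 1 + x := by linarith [hx.1]
    have hm : (0:ℝ) ≤ 1 - x := by linarith [hx.2]
    have h1 : Real.sqrt ((1 - x) / (1 + x)) ≤ Real.sqrt (2 / (1 + x)) :=
      Real.sqrt_le_sqrt ((div_le_div_iff_of_pos_right hp).2 (by linarith))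
    have h2 : Real.sqrt (2 / (1 + x)) = Real.sqrt 2 * (x + 1) ^ (-(1/2) : ℝ) := by
      rw [Real.sqrt_div (by norm_num : (0:ℝ) ≤ 2), Real.rpow_neg (by linarith : (0:ℝ) ≤ x + 1),
        ← Real.sqrt_eq_rpow, add_comm x 1, div_eq_mul_inv]
    rw [Real.norm_eq_abs, Real.norm_eq_abs, abs_of_nonneg (Real.sqrt_nonneg _),
      abs_of_nonneg (mul_nonneg (Real.sqrt_nonneg _) (Real.rpow_nonneg (by linarith) _))]
    exact h1.trans h2.le

/-- For `t ∈ [-1,1]`, `∫_t^1 sqrt((1-x)/(1+x)) dx = arccos t - sqrt(1-t^2)`; in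
particular (taking `t = -1`) the function `x ↦ (1/π) sqrt((1-x)/(1+x))` is a
probability density on `[-1,1]`. -/
theorem integral_sqrt_ratio_eq_arccos :
    (∀ t ∈ Set.Icc (-1 : ℝ) 1,
      ∫ x in t..1, Real.sqrt ((1 - x) / (1 + x))
        = Real.arccos t - Real.sqrt (1 - t ^ 2)) ∧
    ∫ x in (-1 : ℝ)..1, (1 / Real.pi) * Real.sqrt ((1 - x) / (1 + x)) = 1 := by
  have hmain : ∀ t ∈ Set.Icc (-1 : ℝ) 1,
      ∫ x in t..1, Real.sqrt ((1 - x) / (1 + x))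
        = Real.arccos t - Real.sqrt (1 - t ^ 2) := by
    intro t ht
    rcases eq_or_lt_of_le ht.1 with h | h
    · subst h
      have hI : ContinuousWithinAt
          (fun s : ℝ => ∫ x in s..1, Real.sqrt ((1 - x) / (1 + x))) (Icc (-1:ℝ) 1) (-1) := by
        have hint' : IntervalIntegrable (fun x : ℝ => Real.sqrt ((1 - x) / (1 + x))) volume
            (min 1 (-1)) (max 1 1) := by
          rw [show min (1:ℝ) (-1) = -1 by norm_num, show max (1:ℝ) 1 = 1 by norm_num]
          exact gint
        have h := (intervalIntegral.continuousWithinAt_primitive (a := 1) (b₁ := -1) (b₂ := 1)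
          (b₀ := -1) (μ := volume) (measure_singleton _) hint').neg
        have heq : (fun s : ℝ => ∫ x in s..1, Real.sqrt ((1 - x) / (1 + x)))
            = fun b : ℝ => -∫ x in (1:ℝ)..b, Real.sqrt ((1 - x) / (1 + x)) := by
          funext b; rw [intervalIntegral.integral_symm]
        rw [heq]; exact h
      have hne : (𝓝[Ioc (-1:ℝ) 1] (-1)).NeBot := by
        apply mem_closure_iff_nhdsWithin_neBot.1
        rw [closure_Ioc (by norm_num : (-1:ℝ) ≠ 1)]
        exact ⟨le_rfl, by norm_num⟩
      have h1 : Tendsto (fun s : ℝ => ∫ x in s..1, Real.sqrt ((1 - x) / (1 + x)))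
          (𝓝[Ioc (-1:ℝ) 1] (-1)) (𝓝 (∫ x in (-1:ℝ)..1, Real.sqrt ((1 - x) / (1 + x)))) :=
        hI.mono_left (nhdsWithin_mono _ Ioc_subset_Icc_self)
      have h2 : Tendsto (fun s : ℝ => Real.arccos s - Real.sqrt (1 - s ^ 2))
          (𝓝[Ioc (-1:ℝ) 1] (-1)) (𝓝 (Real.arccos (-1) - Real.sqrt (1 - (-1:ℝ) ^ 2))) :=
        ((Real.continuous_arccos.continuousAt.sub
          ((Real.continuous_sqrt.comp (by continuity)).continuousAt)).tendsto).mono_left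
          nhdsWithin_le_nhds
      have hEv : (fun s : ℝ => ∫ x in s..1, Real.sqrt ((1 - x) / (1 + x)))
          =ᶠ[𝓝[Ioc (-1:ℝ) 1] (-1)] (fun s => Real.arccos s - Real.sqrt (1 - s ^ 2)) :=
        eventually_nhdsWithin_of_forall (fun s hs => aux s hs.1 hs.2)
      exact tendsto_nhds_unique (h1.congr' hEv) h2
    · exact aux t h ht.2
  refine ⟨hmain, ?_⟩
  rw [intervalIntegral.integral_const_mul, hmain (-1) (by norm_num)]
  norm_num [Real.arccos_neg_one, Real.pi_ne_zero]
end

section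
/- For every x in [-1,1], the integral over s in (-1,1) of log|x-s| / (π sqrt(1-s^2)) ds equals -log 2. (Equivalently, the arcsine measure is the equilibrium measure for zero potential on [-1,1], with Euler–Lagrange constant ℓ = 2 log 2.) -/
open MeasureTheory Filter Set

open Real in
private lemma int_ends {f : ℝ → ℝ} {a b a' b' : ℝ} (ha : a = a') (hb : b = b') :
    ∫ x in a..b, f x = ∫ x in a'..b', f x := by rw [ha, hb]

open Real in
private lemma II_ends {f : ℝ → ℝ} {a b a' b' : ℝ} (h : IntervalIntegrable f volume a b)
    (ha : a = a') (hb : b = b') : IntervalIntegrable f volume a' b' := by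
  rw [← ha, ← hb]; exact h

open Real in
private lemma logAbsSin_intInt_core :
    IntervalIntegrable (fun θ : ℝ => Real.log |Real.sin θ|) volume 0 (π / 2) := by
  have hπ := Real.pi_pos
  have hle : (0 : ℝ) ≤ π / 2 := by positivity
  rw [intervalIntegrable_iff_integrableOn_Ioc_of_le hle]
  have hrpow : IntegrableOn (fun θ : ℝ => θ ^ (-(1/2) : ℝ)) (Ioc 0 (π/2)) volume := by
    have h := intervalIntegral.intervalIntegrable_rpow' (a := 0) (b := π/2)
      (r := -(1/2)) (by norm_num)
    rwa [intervalIntegrable_iff_integrableOn_Ioc_of_le hle] at h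
  have hg : IntegrableOn (fun θ : ℝ => 2 * θ ^ (-(1/2) : ℝ) - Real.log (2/π))
      (Ioc 0 (π/2)) volume :=
    (hrpow.const_mul 2).sub (integrableOn_const measure_Ioc_lt_top.ne)
  refine hg.mono' ?_ ?_
  · exact (Real.measurable_log.comp Real.measurable_sin.abs).aestronglyMeasurable
  · rw [ae_restrict_iff' measurableSet_Ioc]
    filter_upwards with θ hθ
    obtain ⟨h0, h2⟩ := hθ
    have hsin : 0 < Real.sin θ := Real.sin_pos_of_pos_of_lt_pi h0 (by linarith)
    have habs : |Real.sin θ| = Real.sin θ := abs_of_pos hsin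
    have hlog_np : Real.log (Real.sin θ) ≤ 0 :=
      Real.log_nonpos hsin.le (Real.sin_le_one θ)
    have hlb : 2 / π * θ ≤ Real.sin θ := Real.mul_le_sin h0.le h2
    have hpos : 0 < 2 / π * θ := by positivity
    have hmono : Real.log (2 / π * θ) ≤ Real.log (Real.sin θ) :=
      Real.log_le_log hpos hlb
    have hsplit : Real.log (2 / π * θ) = Real.log (2/π) + Real.log θ :=
      Real.log_mul (by positivity) h0.ne'
    -- -log θ ≤ 2 θ^(-1/2)
    have hs : 0 < Real.sqrt θ := Real.sqrt_pos.2 h0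
    have hlogθ : Real.log θ = 2 * Real.log (Real.sqrt θ) := by
      have h := Real.log_pow (n := 2) (x := Real.sqrt θ)
      rw [Real.sq_sqrt h0.le] at h
      rw [h]; norm_num
    have hinv : -Real.log (Real.sqrt θ) ≤ (Real.sqrt θ)⁻¹ := by
      have h := Real.log_le_sub_one_of_pos (inv_pos.2 hs)
      rw [Real.log_inv] at h
      linarith
    have hrw : θ ^ (-(1/2) : ℝ) = (Real.sqrt θ)⁻¹ := by
      rw [Real.rpow_neg h0.le, Real.sqrt_eq_rpow]
    have hneg_log : -Real.log θ ≤ 2 * θ ^ (-(1/2) : ℝ) := by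
      rw [hlogθ, hrw]; linarith
    have : ‖Real.log |Real.sin θ|‖ = -Real.log (Real.sin θ) := by
      rw [habs, Real.norm_eq_abs, abs_of_nonpos hlog_np]
    rw [this]
    have : -Real.log (Real.sin θ) ≤ -Real.log (2/π) - Real.log θ := by
      rw [hsplit] at hmono; linarith
    linarith

open Real in
private lemma logAbsSin_intInt {a b : ℝ} (ha : a ∈ Icc (-π) π) (hb : b ∈ Icc (-π) π) :
    IntervalIntegrable (fun θ : ℝ => Real.log |Real.sin θ|) volume a b := by
  have hπ := Real.pi_pos
  have h1 := logAbsSin_intInt_core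
  have h2 : IntervalIntegrable (fun θ : ℝ => Real.log |Real.sin θ|) volume (π/2) π := by
    have h := h1.comp_sub_left π
    simp only [Real.sin_pi_sub] at h
    exact (II_ends h (by ring) (by ring) :
      IntervalIntegrable _ volume π (π/2)).symm
  have h3 : IntervalIntegrable (fun θ : ℝ => Real.log |Real.sin θ|) volume 0 π :=
    h1.trans h2
  have h4 : IntervalIntegrable (fun θ : ℝ => Real.log |Real.sin θ|) volume (-π) 0 := by
    have h := h3.comp_add_right π
    simp only [Real.sin_add_pi, abs_neg] at h
    exact II_ends h (by ring) (by ring)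
  have hbig := h4.trans h3
  apply hbig.mono_set
  have hle : -π ≤ π := by linarith
  exact Set.uIcc_subset_uIcc (by rw [Set.uIcc_of_le hle]; exact ha)
    (by rw [Set.uIcc_of_le hle]; exact hb)

open Real in
private lemma logAbsSin_comp_half_add {c : ℝ} (hc : c ∈ Icc (-(π/2)) (π/2)) :
    IntervalIntegrable (fun θ : ℝ => Real.log |Real.sin (θ/2 + c)|) volume 0 π := by
  have hπ := Real.pi_pos
  obtain ⟨hc1, hc2⟩ := hc
  have h0 : IntervalIntegrable (fun θ : ℝ => Real.log |Real.sin θ|) volume c (π/2 + c) :=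
    logAbsSin_intInt ⟨by linarith, by linarith⟩ ⟨by linarith, by linarith⟩
  have h1 := h0.comp_add_right c
  have h1' : IntervalIntegrable (fun x : ℝ => Real.log |Real.sin (x + c)|) volume 0 (π/2) :=
    II_ends h1 (by ring) (by ring)
  have h2 := h1'.comp_mul_right (c := 1/2)
  have h2' : IntervalIntegrable (fun x : ℝ => Real.log |Real.sin (x * (1/2) + c)|)
      volume 0 π := II_ends h2 (by norm_num) (by field_simp)
  simpa only [mul_one_div] using h2'

open Real in
private lemma log_abs_eq_of_abs_eq {p q r : ℝ} (h : |r| = 2 * (|p| * |q|))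
    (hp : p ≠ 0) (hq : q ≠ 0) :
    Real.log |r| = Real.log 2 + (Real.log |p| + Real.log |q|) := by
  rw [h, Real.log_mul two_ne_zero (by positivity : |p| * |q| ≠ 0),
    Real.log_mul (abs_ne_zero.2 hp) (abs_ne_zero.2 hq)]

open Real in
private lemma integral_logAbsSin :
    ∫ θ in (0:ℝ)..π, Real.log |Real.sin θ| = -(π * Real.log 2) := by
  have hπ := Real.pi_pos
  set J := ∫ θ in (0:ℝ)..(π/2), Real.log |Real.sin θ| with hJdef
  have heven : ∫ θ in (-(π/2):ℝ)..0, Real.log |Real.sin θ| = J := by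
    have h1 : (∫ θ in (0:ℝ)..(π/2), Real.log |Real.sin (-θ)|) = J := by
      apply intervalIntegral.integral_congr
      intro θ _
      simp only [Real.sin_neg, abs_neg]
    rw [intervalIntegral.integral_comp_neg (fun θ => Real.log |Real.sin θ|)] at h1
    simpa [neg_zero] using h1
  have hrefl : ∫ θ in (π/2:ℝ)..π, Real.log |Real.sin θ| = J := by
    have h0 : (∫ θ in (π/2:ℝ)..π, Real.log |Real.sin θ|)
        = ∫ θ in (π/2:ℝ)..π, Real.log |Real.sin (π - θ)| := by
      apply intervalIntegral.integral_congr
      intro θ _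
      simp only [Real.sin_pi_sub]
    rw [h0, intervalIntegral.integral_comp_sub_left (fun θ => Real.log |Real.sin θ|) π]
    have e1 : π - π = 0 := by ring
    have e2 : π - π/2 = π/2 := by ring
    rw [e1, e2]
  have hsplit : ∫ θ in (0:ℝ)..π, Real.log |Real.sin θ| = J + J := by
    rw [← intervalIntegral.integral_add_adjacent_intervals
      (logAbsSin_intInt (a := 0) (b := π/2) ⟨by linarith, by linarith⟩
        ⟨by linarith, by linarith⟩)
      (logAbsSin_intInt (a := π/2) (b := π) ⟨by linarith, by linarith⟩
        ⟨by linarith, by linarith⟩), hrefl]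
  have hsplit0 := hsplit
  have hae : ∀ᵐ θ : ℝ, θ ∈ Set.uIoc (0:ℝ) π →
      Real.log |Real.sin θ| = Real.log 2 +
        (Real.log |Real.sin (θ/2)| + Real.log |Real.sin (θ/2 - π/2)|) := by
    have hnull : (volume : Measure ℝ) {π} = 0 := Real.volume_singleton
    filter_upwards [measure_eq_zero_iff_ae_notMem.mp hnull] with θ hθπ hθ
    rw [Set.uIoc_of_le hπ.le] at hθ
    obtain ⟨h0, h1⟩ := hθ
    have hltπ : θ < π := lt_of_le_of_ne h1 (by simpa using hθπ)
    have hs : Real.sin (θ/2) ≠ 0 :=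
      (Real.sin_pos_of_pos_of_lt_pi (by linarith) (by linarith)).ne'
    have hcpos : 0 < Real.cos (θ/2) :=
      Real.cos_pos_of_mem_Ioo ⟨by linarith, by linarith⟩
    have hc : Real.sin (θ/2 - π/2) ≠ 0 := by
      rw [Real.sin_sub_pi_div_two]
      exact neg_ne_zero.2 hcpos.ne'
    apply log_abs_eq_of_abs_eq _ hs hc
    have harg : 2 * (θ/2) = θ := by ring
    have h2 : Real.sin θ = 2 * Real.sin (θ/2) * Real.cos (θ/2) := by
      have h := Real.sin_two_mul (θ/2)
      rwa [harg] at h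
    rw [h2, Real.sin_sub_pi_div_two]
    simp only [abs_mul, abs_neg, abs_two]
    ring
  rw [intervalIntegral.integral_congr_ae hae] at hsplit
  have hint1 : IntervalIntegrable (fun θ : ℝ => Real.log |Real.sin (θ/2)|) volume 0 π := by
    have h := logAbsSin_comp_half_add (c := 0) ⟨by linarith, by linarith⟩
    simpa using h
  have hint2 : IntervalIntegrable (fun θ : ℝ => Real.log |Real.sin (θ/2 - π/2)|)
      volume 0 π := by
    have h := logAbsSin_comp_half_add (c := -(π/2)) ⟨by linarith, by linarith⟩
    simpa only [← sub_eq_add_neg] using h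
  rw [intervalIntegral.integral_add intervalIntegrable_const (hint1.add hint2),
    intervalIntegral.integral_add hint1 hint2] at hsplit
  have hv1 : (∫ θ in (0:ℝ)..π, Real.log |Real.sin (θ/2)|) = 2 * J := by
    have h := intervalIntegral.integral_comp_div (a := 0) (b := π)
      (fun θ => Real.log |Real.sin θ|) (two_ne_zero)
    rw [h, smul_eq_mul,
      int_ends (f := fun θ => Real.log |Real.sin θ|)
        (show (0:ℝ)/2 = 0 by ring) rfl]
  have hv2 : (∫ θ in (0:ℝ)..π, Real.log |Real.sin (θ/2 - π/2)|) = 2 * J := by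
    have h := intervalIntegral.integral_comp_div_sub (a := 0) (b := π)
      (f := fun θ => Real.log |Real.sin θ|) (two_ne_zero) (π/2)
    rw [h, smul_eq_mul,
      int_ends (f := fun θ => Real.log |Real.sin θ|)
        (show (0:ℝ)/2 - π/2 = -(π/2) by ring) (show π/2 - π/2 = (0:ℝ) by ring),
      heven]
  rw [hv1, hv2, intervalIntegral.integral_const] at hsplit
  simp only [smul_eq_mul, sub_zero] at hsplit
  have hJ : J = -(π * Real.log 2) / 2 := by linarith
  rw [hsplit0, hJ]; ring

open Real in
private lemma integral_log_abs_cos_sub_cos {a : ℝ} (ha : a ∈ Icc 0 π) :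
    ∫ θ in (0:ℝ)..π, Real.log |Real.cos a - Real.cos θ| = -(π * Real.log 2) := by
  have hπ := Real.pi_pos
  obtain ⟨ha0, haπ⟩ := ha
  have hae : ∀ᵐ θ : ℝ, θ ∈ Set.uIoc (0:ℝ) π →
      Real.log |Real.cos a - Real.cos θ| = Real.log 2 +
        (Real.log |Real.sin (θ/2 + a/2)| + Real.log |Real.sin (θ/2 - a/2)|) := by
    have hnull : (volume : Measure ℝ) ({a, π} : Set ℝ) = 0 :=
      ((Set.countable_singleton π).insert a).measure_zero volume
    filter_upwards [measure_eq_zero_iff_ae_notMem.mp hnull] with θ hθmem hθ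
    rw [Set.uIoc_of_le hπ.le] at hθ
    obtain ⟨h0, h1⟩ := hθ
    simp only [Set.mem_insert_iff, Set.mem_singleton_iff, not_or] at hθmem
    obtain ⟨hθa, hθπ⟩ := hθmem
    have hltπ : θ < π := lt_of_le_of_ne h1 hθπ
    have hp : Real.sin (θ/2 + a/2) ≠ 0 :=
      (Real.sin_pos_of_pos_of_lt_pi (by linarith) (by linarith)).ne'
    have hq : Real.sin (θ/2 - a/2) ≠ 0 := by
      rw [Ne, Real.sin_eq_zero_iff_of_lt_of_lt (by linarith) (by linarith)]
      intro h
      apply hθa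
      have : θ/2 = a/2 := by linarith
      linarith
    apply log_abs_eq_of_abs_eq _ hp hq
    have hid : Real.cos a - Real.cos θ =
        -2 * Real.sin ((a + θ)/2) * Real.sin ((a - θ)/2) := Real.cos_sub_cos a θ
    have e1 : (a + θ)/2 = θ/2 + a/2 := by ring
    have e2 : (a - θ)/2 = -(θ/2 - a/2) := by ring
    rw [hid, e1, e2, Real.sin_neg]
    simp only [abs_mul, abs_neg, abs_two]
    ring
  rw [intervalIntegral.integral_congr_ae hae]
  have hint1 : IntervalIntegrable (fun θ : ℝ => Real.log |Real.sin (θ/2 + a/2)|)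
      volume 0 π :=
    logAbsSin_comp_half_add ⟨by linarith, by linarith⟩
  have hint2 : IntervalIntegrable (fun θ : ℝ => Real.log |Real.sin (θ/2 - a/2)|)
      volume 0 π := by
    have h := logAbsSin_comp_half_add (c := -(a/2)) ⟨by linarith, by linarith⟩
    simpa only [← sub_eq_add_neg] using h
  rw [intervalIntegral.integral_add intervalIntegrable_const (hint1.add hint2),
    intervalIntegral.integral_add hint1 hint2, intervalIntegral.integral_const]
  have hv1 : (∫ θ in (0:ℝ)..π, Real.log |Real.sin (θ/2 + a/2)|)
      = 2 * ∫ θ in (a/2:ℝ)..(π/2 + a/2), Real.log |Real.sin θ| := by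
    have h := intervalIntegral.integral_comp_div_add (a := 0) (b := π)
      (f := fun θ => Real.log |Real.sin θ|) (two_ne_zero) (a/2)
    rw [h, smul_eq_mul,
      int_ends (f := fun θ => Real.log |Real.sin θ|)
        (show (0:ℝ)/2 + a/2 = a/2 by ring) rfl]
  have hv2 : (∫ θ in (0:ℝ)..π, Real.log |Real.sin (θ/2 - a/2)|)
      = 2 * ∫ θ in (-(a/2):ℝ)..(π/2 - a/2), Real.log |Real.sin θ| := by
    have h := intervalIntegral.integral_comp_div_sub (a := 0) (b := π)
      (f := fun θ => Real.log |Real.sin θ|) (two_ne_zero) (a/2)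
    rw [h, smul_eq_mul,
      int_ends (f := fun θ => Real.log |Real.sin θ|)
        (show (0:ℝ)/2 - a/2 = -(a/2) by ring) rfl]
  have hB : (∫ θ in (-(a/2):ℝ)..(π/2 - a/2), Real.log |Real.sin θ|)
      = ∫ θ in (a/2 - π/2 : ℝ)..(a/2), Real.log |Real.sin θ| := by
    have hcomp := intervalIntegral.integral_comp_neg (a := a/2 - π/2) (b := a/2)
      (fun θ => Real.log |Real.sin θ|)
    have h1 : (∫ θ in (a/2 - π/2 : ℝ)..(a/2), Real.log |Real.sin (-θ)|)
        = ∫ θ in (a/2 - π/2 : ℝ)..(a/2), Real.log |Real.sin θ| := by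
      apply intervalIntegral.integral_congr
      intro θ _
      simp only [Real.sin_neg, abs_neg]
    rw [h1] at hcomp
    rw [hcomp]
    have e3 : -(a/2 - π/2) = π/2 - a/2 := by ring
    rw [e3]
  have hsum : (∫ θ in (a/2 - π/2 : ℝ)..(a/2), Real.log |Real.sin θ|)
      + (∫ θ in (a/2:ℝ)..(π/2 + a/2), Real.log |Real.sin θ|) = -(π * Real.log 2) := by
    rw [intervalIntegral.integral_add_adjacent_intervals
      (logAbsSin_intInt ⟨by linarith, by linarith⟩ ⟨by linarith, by linarith⟩)
      (logAbsSin_intInt ⟨by linarith, by linarith⟩ ⟨by linarith, by linarith⟩)]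
    have hper : Function.Periodic (fun θ : ℝ => Real.log |Real.sin θ|) π := by
      intro t
      simp [Real.sin_add_pi]
    have h := hper.intervalIntegral_add_eq (a/2 - π/2) 0
    have e4 : a/2 - π/2 + π = π/2 + a/2 := by ring
    rw [e4, zero_add] at h
    rw [h, integral_logAbsSin]
  rw [hB] at hv2
  rw [hv1, hv2]
  simp only [smul_eq_mul, sub_zero]
  linarith

/-- The logarithmic potential of the arcsine measure on `[-1,1]` is constant equal
to `-log 2` on `[-1,1]`: the arcsine measure is the equilibrium measure for zero
potential, with Euler–Lagrange constant `ℓ = 2 log 2`. -/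
theorem arcsine_log_potential (x : ℝ) (hx : x ∈ Set.Icc (-1 : ℝ) 1) :
    ∫ s in Set.Ioo (-1 : ℝ) 1,
        Real.log |x - s| / (Real.pi * Real.sqrt (1 - s ^ 2))
      = -Real.log 2 := by
  have hπ := Real.pi_pos
  obtain ⟨hx1, hx2⟩ := hx
  have hxa : Real.cos (Real.arccos x) = x := Real.cos_arccos hx1 hx2
  -- the image of (0, π) under cos is (-1, 1)
  have himg : Real.cos '' Set.Ioo 0 Real.pi = Set.Ioo (-1 : ℝ) 1 := by
    ext y
    constructor
    · rintro ⟨θ, ⟨h0, h1⟩, rfl⟩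
      constructor
      · have h := Real.strictAntiOn_cos ⟨h0.le, h1.le⟩ ⟨hπ.le, le_refl _⟩ h1
        rwa [Real.cos_pi] at h
      · have h := Real.strictAntiOn_cos ⟨le_refl _, hπ.le⟩ ⟨h0.le, h1.le⟩ h0
        rwa [Real.cos_zero] at h
    · rintro ⟨hy1, hy2⟩
      refine ⟨Real.arccos y, ⟨Real.arccos_pos.2 hy2, ?_⟩, Real.cos_arccos hy1.le hy2.le⟩
      refine lt_of_le_of_ne (Real.arccos_le_pi y) fun h => ?_
      exact absurd (Real.arccos_eq_pi.mp h) (not_le.2 hy1)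
  have hcov := integral_image_eq_integral_abs_deriv_smul (f' := fun θ => -Real.sin θ)
    measurableSet_Ioo
    (fun θ _ => (Real.hasDerivAt_cos θ).hasDerivWithinAt)
    (Real.injOn_cos.mono Set.Ioo_subset_Icc_self)
    (fun s => Real.log |x - s| / (Real.pi * Real.sqrt (1 - s ^ 2)))
  rw [himg] at hcov
  rw [hcov]
  have hsimp : ∀ θ ∈ Set.Ioo (0:ℝ) Real.pi,
      |(-Real.sin θ)| • (Real.log |x - Real.cos θ| /
        (Real.pi * Real.sqrt (1 - Real.cos θ ^ 2)))
      = Real.log |x - Real.cos θ| / Real.pi := by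
    intro θ ⟨h0, h1⟩
    have hsin : 0 < Real.sin θ := Real.sin_pos_of_pos_of_lt_pi h0 h1
    have hsq : Real.sqrt (1 - Real.cos θ ^ 2) = Real.sin θ := by
      rw [← Real.sin_sq, Real.sqrt_sq hsin.le]
    rw [hsq, abs_neg, abs_of_pos hsin, smul_eq_mul]
    field_simp
  rw [MeasureTheory.setIntegral_congr_fun measurableSet_Ioo hsimp]
  rw [← MeasureTheory.integral_Ioc_eq_integral_Ioo,
    ← intervalIntegral.integral_of_le hπ.le]
  rw [intervalIntegral.integral_div]
  have hrw : (∫ θ in (0:ℝ)..Real.pi, Real.log |x - Real.cos θ|)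
      = ∫ θ in (0:ℝ)..Real.pi, Real.log |Real.cos (Real.arccos x) - Real.cos θ| := by
    rw [hxa]
  rw [hrw, integral_log_abs_cos_sub_cos ⟨Real.arccos_nonneg x, Real.arccos_le_pi x⟩]
  rw [div_eq_iff hπ.ne']
  ring
end

section
/- For the Laguerre-type potential V(x) = 2(x+1) with equilibrium measure dμ(s) = (1/π) sqrt((1-s)/(1+s)) ds on [-1,1], the Euler–Lagrange inequality is strict off the support: for every real x > 1, 2 ∫_{-1}^{1} log|x-s| dμ(s) < 2(x+1) - (2 + 2 log 2). -/
open MeasureTheory Filter Set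

section LaguerreAux
open Real intervalIntegral

lemma intInt_log_sin : IntervalIntegrable (fun u => log (sin u)) volume 0 (π/2) := by
  have hdom : IntervalIntegrable (fun u : ℝ => 2 * u ^ (-(1:ℝ)/2) + log (π/2)) volume 0 (π/2) := by
    apply IntervalIntegrable.add _ intervalIntegrable_const
    exact (intervalIntegrable_rpow' (by norm_num)).const_mul 2
  apply hdom.mono_fun'
  · exact (Real.measurable_log.comp Real.continuous_sin.measurable).aestronglyMeasurable
  · rw [EventuallyLE, ae_restrict_iff' measurableSet_uIoc]
    filter_upwards with u hu
    rw [uIoc_of_le (by positivity : (0:ℝ) ≤ π/2)] at hu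
    obtain ⟨h0, h2⟩ := hu
    have hsinpos : 0 < sin u := sin_pos_of_pos_of_lt_pi h0 (lt_of_le_of_lt h2 (by linarith [pi_pos]))
    have hsin1 : sin u ≤ 1 := sin_le_one u
    have hlogle : log (sin u) ≤ 0 := log_nonpos hsinpos.le hsin1
    have hlow : 2/π * u ≤ sin u := mul_le_sin h0.le h2
    have h2pi : (0:ℝ) < 2/π := by positivity
    have hloglow : log (2/π) + log u ≤ log (sin u) := by
      rw [← log_mul (ne_of_gt h2pi) (ne_of_gt h0)]
      exact log_le_log (by positivity) hlow
    have hnorm : ‖log (sin u)‖ = - log (sin u) := by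
      rw [Real.norm_eq_abs, abs_of_nonpos hlogle]
    rw [hnorm]
    have hlogpi : - log (2/π) = log (π/2) := by
      rw [← log_inv]; norm_num
    have hneglogu : - log u ≤ 2 * u ^ (-(1:ℝ)/2) := by
      rcases le_or_gt u 1 with h1 | h1
      · have hru : (0:ℝ) < u ^ (-(1:ℝ)/2) := rpow_pos_of_pos h0 _
        have : log (u ^ (-(1:ℝ)/2)) ≤ u ^ (-(1:ℝ)/2) - 1 := log_le_sub_one_of_pos hru
        rw [log_rpow h0] at this
        nlinarith [this]
      · have : 0 < log u := log_pos h1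
        have hru : (0:ℝ) < u ^ (-(1:ℝ)/2) := rpow_pos_of_pos h0 _
        linarith
    linarith [hloglow]

lemma intInt_log_cos : IntervalIntegrable (fun u => log (cos u)) volume 0 (π/2) := by
  have h := intInt_log_sin.comp_sub_left (π/2)
  simp only [sin_pi_div_two_sub, sub_zero, sub_self] at h
  exact h.symm

lemma intInt_log_sin' : IntervalIntegrable (fun u => log (sin u)) volume (π/2) π := by
  have h := intInt_log_sin.comp_sub_left π
  simp only [sin_pi_sub, sub_zero] at h
  have : π - π/2 = π/2 := by ring
  rw [this] at h
  exact h.symm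

lemma log_cos_int_eq : ∫ u in (0:ℝ)..(π/2), log (cos u) = ∫ u in (0:ℝ)..(π/2), log (sin u) := by
  have h := intervalIntegral.integral_comp_sub_left (a := (0:ℝ)) (b := π/2)
    (fun u => log (sin u)) (π/2)
  simp only [sin_pi_div_two_sub, sub_zero, sub_self] at h
  rw [← h]

lemma log_sin_upper : ∫ u in (π/2)..π, log (sin u) = ∫ u in (0:ℝ)..(π/2), log (sin u) := by
  have h := intervalIntegral.integral_comp_sub_left (a := (0:ℝ)) (b := π/2)
    (fun u => log (sin u)) π
  simp only [sin_pi_sub, sub_zero] at h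
  have h2 : π - π/2 = π/2 := by ring
  rw [h2] at h
  rw [← h]

lemma log_sin_full : ∫ u in (0:ℝ)..π, log (sin u)
    = 2 * ∫ u in (0:ℝ)..(π/2), log (sin u) := by
  rw [← intervalIntegral.integral_add_adjacent_intervals intInt_log_sin intInt_log_sin',
    log_sin_upper]
  ring

lemma log_sin_double : ∫ u in (0:ℝ)..(π/2), log (sin (2*u))
    = ∫ u in (0:ℝ)..(π/2), log (sin u) := by
  rw [intervalIntegral.integral_comp_mul_left (fun v => log (sin v)) two_ne_zero]
  simp only [mul_zero]
  rw [show (2:ℝ) * (π/2) = π by ring, log_sin_full]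
  simp

lemma log_sin_value : ∫ u in (0:ℝ)..(π/2), log (sin u) = -(π/2) * log 2 := by
  set L := ∫ u in (0:ℝ)..(π/2), log (sin u) with hL
  have key : ∫ u in (0:ℝ)..(π/2), (log (sin u) + log (cos u))
      = ∫ u in (0:ℝ)..(π/2), (log (sin (2*u)) - log 2) := by
    apply intervalIntegral.integral_congr_ae
    have hae : ∀ᵐ u : ℝ, u ≠ π/2 := by
      rw [ae_iff]
      have hset : {u : ℝ | ¬ u ≠ π/2} = {π/2} := by ext u; simp
      rw [hset]
      exact measure_singleton _
    filter_upwards [hae] with u hu hmem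
    rw [uIoc_of_le (by positivity : (0:ℝ) ≤ π/2)] at hmem
    have h0 : 0 < u := hmem.1
    have h2 : u < π/2 := lt_of_le_of_ne hmem.2 hu
    have hs : 0 < sin u := sin_pos_of_pos_of_lt_pi h0 (by linarith [pi_pos])
    have hc : 0 < cos u := cos_pos_of_mem_Ioo ⟨by linarith [pi_pos], h2⟩
    rw [sin_two_mul, log_mul (by positivity) (ne_of_gt hc), log_mul two_ne_zero (ne_of_gt hs)]
    ring
  have hsum : ∫ u in (0:ℝ)..(π/2), (log (sin u) + log (cos u)) = 2 * L := by
    rw [intervalIntegral.integral_add intInt_log_sin intInt_log_cos, log_cos_int_eq]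
    ring
  have hint2 : IntervalIntegrable (fun u => log (sin (2*u))) volume 0 (π/2) := by
    have h := (intInt_log_sin.trans intInt_log_sin').comp_mul_left (c := 2)
    simpa using h
  have hrhs : ∫ u in (0:ℝ)..(π/2), (log (sin (2*u)) - log 2)
      = L - (π/2) * log 2 := by
    rw [intervalIntegral.integral_sub hint2 intervalIntegrable_const, log_sin_double,
      intervalIntegral.integral_const]
    simp [smul_eq_mul]
    exact hL.symm
  rw [hsum, hrhs] at key
  linarith

lemma intInt_cos_two_mul_log_sin :
    IntervalIntegrable (fun u => cos (2*u) * log (sin u)) volume 0 (π/2) := by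
  apply intInt_log_sin.mono_fun
  · exact ((Real.continuous_cos.comp (continuous_const.mul continuous_id)).measurable.mul
      (Real.measurable_log.comp Real.continuous_sin.measurable)).aestronglyMeasurable
  · filter_upwards with u
    rw [Real.norm_eq_abs, Real.norm_eq_abs, abs_mul]
    exact mul_le_of_le_one_left (abs_nonneg _) (abs_cos_le_one _)

lemma cos_two_mul_log_sin_value :
    ∫ u in (0:ℝ)..(π/2), cos (2*u) * log (sin u) = -(π/4) := by
  set ψ : ℝ → ℝ := fun u => cos u * (sin u * log (sin u)) - u/2 - sin (2*u)/4 with hψ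
  have hcont : ContinuousOn ψ (Icc 0 (π/2)) := by
    apply Continuous.continuousOn
    exact ((Real.continuous_cos.mul (Real.continuous_mul_log.comp Real.continuous_sin)).sub
      (continuous_id.div_const 2)).sub
      ((Real.continuous_sin.comp (continuous_const.mul continuous_id)).div_const 4)
  have hderiv : ∀ u ∈ Ioo (0:ℝ) (π/2),
      HasDerivWithinAt ψ (cos (2*u) * log (sin u)) (Ioi u) u := by
    intro u hu
    have hs : 0 < sin u := sin_pos_of_pos_of_lt_pi hu.1 (by linarith [pi_pos, hu.2])
    have hsin : HasDerivAt sin (cos u) u := Real.hasDerivAt_sin u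
    have hcos : HasDerivAt cos (-sin u) u := Real.hasDerivAt_cos u
    have hlog : HasDerivAt (fun v => log (sin v)) (cos u / sin u) u := by
      have := (Real.hasDerivAt_log (ne_of_gt hs)).comp u hsin
      exact hsin.log (ne_of_gt hs)
    have d1 : HasDerivAt (fun v => sin v * log (sin v))
        (cos u * log (sin u) + cos u) u := by
      exact (hsin.mul hlog).congr_deriv (by field_simp)
    have d2 : HasDerivAt (fun v => cos v * (sin v * log (sin v)))
        ((-sin u) * (sin u * log (sin u)) + cos u * (cos u * log (sin u) + cos u)) u :=
      hcos.mul d1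
    have d3 : HasDerivAt (fun v : ℝ => v/2) (1/2) u := (hasDerivAt_id u).div_const 2
    have d4 : HasDerivAt (fun v : ℝ => sin (2*v)/4) (cos (2*u) * 2 / 4) u := by
      have := (((Real.hasDerivAt_sin (2*u)).comp u
        ((hasDerivAt_id u).const_mul 2)).div_const 4)
      simpa [Function.comp] using this
    have dψ : HasDerivAt ψ (cos (2*u) * log (sin u)) u := by
      have := (d2.sub d3).sub d4
      exact this.congr_deriv (by
        rw [cos_two_mul]
        linear_combination (-Real.log (Real.sin u)) * (Real.sin_sq_add_cos_sq u))
    exact dψ.hasDerivWithinAt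
  have := intervalIntegral.integral_eq_sub_of_hasDeriv_right_of_le
    (by positivity : (0:ℝ) ≤ π/2) hcont hderiv intInt_cos_two_mul_log_sin
  rw [this, hψ]
  simp only [show (2:ℝ)*(π/2) = π by ring]
  norm_num [Real.cos_pi_div_two, Real.sin_pi]
  ring

lemma sin_sq_log_sin_value :
    ∫ u in (0:ℝ)..(π/2), sin u ^ 2 * log (sin u) = π/8 - (π/4) * log 2 := by
  have hcongr : ∀ u : ℝ, sin u ^ 2 * log (sin u)
      = (1/2) * log (sin u) - (1/2) * (cos (2*u) * log (sin u)) := by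
    intro u
    have := Real.sin_sq_eq_half_sub u
    linear_combination (Real.log (Real.sin u)) * this
  simp only [hcongr]
  rw [intervalIntegral.integral_sub (intInt_log_sin.const_mul _)
    (intInt_cos_two_mul_log_sin.const_mul _),
    intervalIntegral.integral_const_mul, intervalIntegral.integral_const_mul,
    log_sin_value, cos_two_mul_log_sin_value]
  ring

lemma one_sub_cos_log_value :
    ∫ θ in (0:ℝ)..π, (1 - cos θ) * log (1 - cos θ) = π - π * log 2 := by
  have hcongr : ∀ θ ∈ uIcc (0:ℝ) π, (1 - cos θ) * log (1 - cos θ)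
      = 2 * sin (θ/2) ^ 2 * log 2 + 4 * (sin (θ/2) ^ 2 * log (sin (θ/2))) := by
    intro θ hθ
    rw [uIcc_of_le (by positivity : (0:ℝ) ≤ π)] at hθ
    have hhalf : 1 - cos θ = 2 * sin (θ/2) ^ 2 := by
      have := Real.sin_sq_eq_half_sub (θ/2)
      rw [show 2*(θ/2) = θ by ring] at this
      linarith
    rcases eq_or_lt_of_le hθ.1 with h0 | h0
    · rw [← h0]; simp
    · have hs : 0 < sin (θ/2) := by
        apply sin_pos_of_pos_of_lt_pi (by positivity)
        linarith [hθ.2, pi_pos]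
      rw [hhalf, log_mul two_ne_zero (by positivity), log_pow]
      push_cast
      ring
  rw [intervalIntegral.integral_congr hcongr]
  have hint1 : IntervalIntegrable (fun θ : ℝ => 2 * sin (θ/2) ^ 2 * log 2) volume 0 π := by
    apply Continuous.intervalIntegrable
    continuity
  have hint2 : IntervalIntegrable (fun θ : ℝ => 4 * (sin (θ/2) ^ 2 * log (sin (θ/2)))) volume 0 π := by
    apply Continuous.intervalIntegrable
    have : Continuous fun θ : ℝ => sin (θ/2) * (sin (θ/2) * log (sin (θ/2))) := by
      exact (Real.continuous_sin.comp (continuous_id.div_const 2)).mul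
        (Real.continuous_mul_log.comp (Real.continuous_sin.comp (continuous_id.div_const 2)))
    have heq : (fun θ : ℝ => 4 * (sin (θ/2) ^ 2 * log (sin (θ/2))))
        = fun θ : ℝ => 4 * (sin (θ/2) * (sin (θ/2) * log (sin (θ/2)))) := by
      funext θ; ring
    rw [heq]
    exact continuous_const.mul this
  rw [intervalIntegral.integral_add hint1 hint2]
  have h1 : ∫ θ in (0:ℝ)..π, 2 * sin (θ/2) ^ 2 * log 2
      = (2 * log 2) * ∫ θ in (0:ℝ)..π, sin (θ/2) ^ 2 := by
    rw [← intervalIntegral.integral_const_mul]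
    congr 1; funext θ; ring
  have h2 : ∫ θ in (0:ℝ)..π, sin (θ/2) ^ 2 = 2 * ∫ u in (0:ℝ)..(π/2), sin u ^ 2 := by
    have := intervalIntegral.integral_comp_div (a := (0:ℝ)) (b := π)
      (fun u => sin u ^ 2) (c := 2) two_ne_zero
    rw [this]
    norm_num
  have h3 : ∫ θ in (0:ℝ)..π, 4 * (sin (θ/2) ^ 2 * log (sin (θ/2)))
      = 4 * ∫ θ in (0:ℝ)..π, (fun u => sin u ^ 2 * log (sin u)) (θ/2) := by
    rw [← intervalIntegral.integral_const_mul]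
  have h4 : ∫ θ in (0:ℝ)..π, (fun u => sin u ^ 2 * log (sin u)) (θ/2)
      = 2 * ∫ u in (0:ℝ)..(π/2), sin u ^ 2 * log (sin u) := by
    have := intervalIntegral.integral_comp_div (a := (0:ℝ)) (b := π)
      (fun u => sin u ^ 2 * log (sin u)) (c := 2) two_ne_zero
    rw [this]
    norm_num
  rw [h1, h2, h3, h4, integral_sin_sq, sin_sq_log_sin_value]
  simp [Real.sin_pi, Real.cos_pi]
  ring

lemma cos_mem_Ioo : ∀ θ ∈ Ioo (0:ℝ) π, cos θ ∈ Ioo (-1:ℝ) 1 := by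
  intro θ hθ
  constructor
  · have := Real.strictAntiOn_cos ⟨hθ.1.le, hθ.2.le⟩ ⟨by positivity, le_refl π⟩ hθ.2
    rwa [Real.cos_pi] at this
  · have := Real.strictAntiOn_cos ⟨le_refl 0, pi_pos.le⟩ ⟨hθ.1.le, hθ.2.le⟩ hθ.1
    rwa [Real.cos_zero] at this

lemma cos_image_Ioo : cos '' Ioo (0:ℝ) π = Ioo (-1:ℝ) 1 := by
  ext y
  constructor
  · rintro ⟨θ, hθ, rfl⟩
    exact cos_mem_Ioo θ hθ
  · intro hy
    refine ⟨arccos y, ⟨Real.arccos_pos.mpr hy.2, ?_⟩, Real.cos_arccos hy.1.le hy.2.le⟩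
    refine lt_of_le_of_ne (Real.arccos_le_pi y) (fun h => ?_)
    have := Real.arccos_eq_pi.mp h
    linarith [hy.1]

lemma cov_cos (g : ℝ → ℝ) :
    ∫ s in Ioo (-1:ℝ) 1, g s = ∫ θ in Ioo (0:ℝ) π, sin θ * g (cos θ) := by
  have hderiv : ∀ θ ∈ Ioo (0:ℝ) π, HasDerivWithinAt cos (-sin θ) (Ioo (0:ℝ) π) θ :=
    fun θ _ => (Real.hasDerivAt_cos θ).hasDerivWithinAt
  have hinj : InjOn cos (Ioo (0:ℝ) π) := Real.injOn_cos.mono Ioo_subset_Icc_self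
  have h := MeasureTheory.integral_image_eq_integral_abs_deriv_smul
    measurableSet_Ioo hderiv hinj g
  rw [cos_image_Ioo] at h
  rw [h]
  apply MeasureTheory.setIntegral_congr_fun measurableSet_Ioo
  intro θ hθ
  have hs : 0 < sin θ := sin_pos_of_pos_of_lt_pi hθ.1 hθ.2
  simp [abs_of_nonneg hs.le, smul_eq_mul, abs_neg]


end LaguerreAux

section Main
open Real intervalIntegral

/-- Strict Euler–Lagrange inequality off the support for the Laguerre-type
potential `V(x) = 2(x+1)` with equilibrium density `(1/π) sqrt((1-s)/(1+s))`:
for every real `x > 1`,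
`2 ∫ log|x-s| dμ(s) < 2(x+1) - (2 + 2 log 2)`. -/
theorem laguerre_equilibrium_strict_inequality (x : ℝ) (hx : 1 < x) :
    2 * ∫ s in Set.Ioo (-1 : ℝ) 1,
        Real.log |x - s| * ((1 / Real.pi) * Real.sqrt ((1 - s) / (1 + s)))
      < 2 * (x + 1) - (2 + 2 * Real.log 2) := by
  set F : ℝ → ℝ := fun s => Real.log |x - s| * ((1 / Real.pi) * Real.sqrt ((1 - s) / (1 + s)))
    with hF
  have hπ : (0:ℝ) < π := pi_pos
  -- change of variables
  have hsub : ∫ s in Ioo (-1:ℝ) 1, F s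
      = ∫ θ in Ioo (0:ℝ) π, (1/π) * (log (x - cos θ) * (1 - cos θ)) := by
    rw [cov_cos F]
    apply MeasureTheory.setIntegral_congr_fun measurableSet_Ioo
    intro θ hθ
    have hc := cos_mem_Ioo θ hθ
    have h1c : 0 < 1 - cos θ := by linarith [hc.2]
    have h1c' : 0 < 1 + cos θ := by linarith [hc.1]
    have hxc : 0 < x - cos θ := by linarith [hc.2]
    have hsin : sin θ = Real.sqrt (1 - cos θ ^ 2) :=
      Real.sin_eq_sqrt_one_sub_cos_sq hθ.1.le hθ.2.le
    have hsqrt : sin θ * Real.sqrt ((1 - cos θ) / (1 + cos θ)) = 1 - cos θ := by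
      rw [hsin, ← Real.sqrt_mul (by nlinarith : (0:ℝ) ≤ 1 - cos θ ^ 2)]
      have : (1 - cos θ ^ 2) * ((1 - cos θ) / (1 + cos θ)) = (1 - cos θ) ^ 2 := by
        field_simp
        ring
      rw [this, Real.sqrt_sq h1c.le]
    rw [hF]
    simp only
    rw [abs_of_pos hxc]
    calc sin θ * (log (x - cos θ) * ((1/π) * Real.sqrt ((1 - cos θ)/(1 + cos θ))))
        = (1/π) * (log (x - cos θ) * (sin θ * Real.sqrt ((1 - cos θ)/(1 + cos θ)))) := by
          ring
      _ = (1/π) * (log (x - cos θ) * (1 - cos θ)) := by rw [hsqrt]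
  have hIoo : (∫ θ in Ioo (0:ℝ) π, (1/π) * (log (x - cos θ) * (1 - cos θ)))
      = ∫ θ in (0:ℝ)..π, (1/π) * (log (x - cos θ) * (1 - cos θ)) := by
    rw [intervalIntegral.integral_of_le hπ.le, MeasureTheory.integral_Ioc_eq_integral_Ioo]
  rw [hsub, hIoo, intervalIntegral.integral_const_mul]
  set f₁ : ℝ → ℝ := fun θ => log (x - cos θ) * (1 - cos θ) with hf₁
  set f₂ : ℝ → ℝ := fun θ => (1 - cos θ) * log (1 - cos θ) + (x - 1) with hf₂
  have hxcall : ∀ θ : ℝ, 0 < x - cos θ := fun θ => by linarith [Real.cos_le_one θ]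
  have hf₁c : Continuous f₁ :=
    ((continuous_const.sub Real.continuous_cos).log (fun θ => ne_of_gt (hxcall θ))).mul
      (continuous_const.sub Real.continuous_cos)
  have hf₂c : Continuous f₂ :=
    (Real.continuous_mul_log.comp (continuous_const.sub Real.continuous_cos)).add
      continuous_const
  have hpos : ∀ θ ∈ Ioo (0:ℝ) π, 0 < f₂ θ - f₁ θ := by
    intro θ hθ
    have hc := cos_mem_Ioo θ hθ
    have h1c : 0 < 1 - cos θ := by linarith [hc.2]
    have hxc' : 0 < x - cos θ := hxcall θ
    have hgt1 : 1 < (x - cos θ)/(1 - cos θ) := (one_lt_div h1c).mpr (by linarith)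
    have key := Real.log_lt_sub_one_of_pos (by positivity) (ne_of_gt hgt1)
    rw [Real.log_div (ne_of_gt hxc') (ne_of_gt h1c)] at key
    have key2 : (1 - cos θ) * (log (x - cos θ) - log (1 - cos θ))
        < (1 - cos θ) * ((x - cos θ)/(1 - cos θ) - 1) := mul_lt_mul_of_pos_left key h1c
    have key3 : (1 - cos θ) * ((x - cos θ)/(1 - cos θ) - 1) = x - 1 := by field_simp; ring
    simp only [hf₁, hf₂]
    nlinarith [key2, key3]
  have hlt : ∫ θ in (0:ℝ)..π, f₁ θ < ∫ θ in (0:ℝ)..π, f₂ θ := by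
    have h := intervalIntegral.intervalIntegral_pos_of_pos_on
      (((hf₂c.sub hf₁c)).intervalIntegrable 0 π) hpos hπ
    simp only [Pi.sub_apply] at h
    rw [intervalIntegral.integral_sub (hf₂c.intervalIntegrable 0 π)
      (hf₁c.intervalIntegrable 0 π)] at h
    linarith
  have hf₂val : ∫ θ in (0:ℝ)..π, f₂ θ = π - π * log 2 + (x - 1) * π := by
    have hc1 : Continuous fun θ : ℝ => (1 - cos θ) * log (1 - cos θ) :=
      Real.continuous_mul_log.comp (continuous_const.sub Real.continuous_cos)
    have hadd : ∫ θ in (0:ℝ)..π, f₂ θ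
        = (∫ θ in (0:ℝ)..π, (1 - cos θ) * log (1 - cos θ)) + ∫ θ in (0:ℝ)..π, (x - 1) :=
      intervalIntegral.integral_add (hc1.intervalIntegrable 0 π) intervalIntegrable_const
    rw [hadd, one_sub_cos_log_value, intervalIntegral.integral_const]
    simp [smul_eq_mul]
    ring
  have hT : ∫ θ in (0:ℝ)..π, f₁ θ < π * (x - log 2) := by
    have : π - π * log 2 + (x - 1) * π = π * (x - log 2) := by ring
    rw [hf₂val, this] at hlt
    exact hlt
  calc 2 * ((1/π) * ∫ θ in (0:ℝ)..π, f₁ θ)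
      < 2 * ((1/π) * (π * (x - log 2))) := by
        exact mul_lt_mul_of_pos_left (mul_lt_mul_of_pos_left hT (by positivity)) two_pos
    _ = 2 * (x + 1) - (2 + 2 * log 2) := by
        field_simp
        ring

end Main
end

section
/- For every real z > 0, the integral from 0 to z of x · d/dx [log Γ(1 + x/2) - log Γ(1 + x)] dx equals -z^2/4 + log( G(1 + z/2)^2 / G(1 + z) ), where G is Barnes' G-function. -/
open MeasureTheory Filter Set

/-- Barnes' G-function, defined via its Weierstrass product. It satisfies
`G(1) = 1` and `G(z+1) = Γ(z) G(z)`. -/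
noncomputable def barnesG (x : ℝ) : ℝ :=
  (2 * Real.pi) ^ ((x - 1) / 2) *
    Real.exp (-((x - 1) + (x - 1) ^ 2 * (1 + Real.eulerMascheroniConstant)) / 2) *
    ∏' k : ℕ, ((1 + (x - 1) / ((k : ℝ) + 1)) ^ (k + 1) *
      Real.exp ((x - 1) ^ 2 / (2 * ((k : ℝ) + 1)) - (x - 1)))

namespace BarnesAux

open Topology intervalIntegral

local notation "γ" => Real.eulerMascheroniConstant

/-- The `k`-th term of the Weierstrass series for `log Γ(1+y) + γ y`. -/
noncomputable def tk (k : ℕ) (y : ℝ) : ℝ := y / ((k : ℝ) + 1) - Real.log (1 + y / ((k : ℝ) + 1))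

/-- The `k`-th term of the series for the logarithm of the Barnes product. -/
noncomputable def gk (k : ℕ) (y : ℝ) : ℝ :=
  ((k : ℝ) + 1) * Real.log (1 + y / ((k : ℝ) + 1)) + y ^ 2 / (2 * ((k : ℝ) + 1)) - y

lemma tk_nonneg (k : ℕ) {y : ℝ} (hy : 0 ≤ y) : 0 ≤ tk k y := by
  have hc : (0:ℝ) < (k : ℝ) + 1 := by positivity
  have ht : 0 ≤ y / ((k : ℝ) + 1) := by positivity
  have := Real.log_le_sub_one_of_pos (show (0:ℝ) < 1 + y / ((k:ℝ)+1) by linarith)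
  simp only [tk]; linarith

lemma tk_le (k : ℕ) {y : ℝ} (hy : 0 ≤ y) : tk k y ≤ y ^ 2 * (1 / ((k : ℝ) + 1) ^ 2) := by
  have hc : (0:ℝ) < (k : ℝ) + 1 := by positivity
  set t := y / ((k : ℝ) + 1) with ht_def
  have ht : 0 ≤ t := by positivity
  have h1 : 0 < 1 + t := by linarith
  have hlog := Real.one_sub_inv_le_log_of_pos h1
  have hinv : (1 + t) * (1 + t)⁻¹ = 1 := mul_inv_cancel₀ h1.ne'
  have key : t - Real.log (1 + t) ≤ t ^ 2 := by nlinarith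
  have ht2 : t ^ 2 = y ^ 2 * (1 / ((k : ℝ) + 1) ^ 2) := by
    rw [ht_def, div_pow, one_div, div_eq_mul_inv]
  simp only [tk]; rw [← ht2]; exact key

lemma summable_inv_sq : Summable (fun k : ℕ => 1 / ((k : ℝ) + 1) ^ 2) := by
  have h := (summable_nat_add_iff (f := fun n : ℕ => 1 / (n : ℝ) ^ 2) 1).mpr
    (Real.summable_one_div_nat_pow.mpr one_lt_two)
  simpa using h

lemma summable_tk {y : ℝ} (hy : 0 ≤ y) : Summable (fun k => tk k y) :=
  Summable.of_nonneg_of_le (fun k => tk_nonneg k hy) (fun k => tk_le k hy)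
    (summable_inv_sq.mul_left (y ^ 2))

lemma gk_eq (k : ℕ) (y : ℝ) :
    gk k y = ((k : ℝ) + 1) * (Real.log (1 + y / ((k : ℝ) + 1)) - y / ((k:ℝ)+1)
      + (y / ((k:ℝ)+1)) ^ 2 / 2) := by
  have hc : ((k : ℝ) + 1) ≠ 0 := by positivity
  simp only [gk]; generalize Real.log (1 + y / ((k : ℝ) + 1)) = L; field_simp; ring

lemma abs_gk_le {y : ℝ} (hy : 0 ≤ y) (k : ℕ) (hk : 2 * y ≤ (k : ℝ) + 1) :
    |gk k y| ≤ 2 * y ^ 3 * (1 / ((k : ℝ) + 1) ^ 2) := by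
  have hc : (0:ℝ) < (k : ℝ) + 1 := by positivity
  set c := ((k : ℝ) + 1) with hc_def
  set t := y / c with ht_def
  have ht0 : 0 ≤ t := by positivity
  have ht : t ≤ 1 / 2 := by
    rw [ht_def, div_le_iff₀ hc]; linarith
  have habs : |(-t)| < 1 := by rw [abs_neg, abs_of_nonneg ht0]; linarith
  have key := Real.abs_log_sub_add_sum_range_le habs 2
  simp only [Finset.sum_range_succ, Finset.sum_range_zero, zero_add, pow_one] at key
  rw [abs_neg, abs_of_nonneg ht0] at key
  have h1 : (1 : ℝ) - -t = 1 + t := by ring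
  rw [h1] at key
  have hbound : |Real.log (1 + t) - t + t ^ 2 / 2| ≤ 2 * t ^ 3 := by
    have h2 : -t / ((0:ℕ) + 1) + (-t) ^ (1 + 1) / ((1:ℕ) + 1) + Real.log (1 + t)
        = Real.log (1 + t) - t + t ^ 2 / 2 := by
      push_cast; ring
    rw [h2] at key
    rw [show (2:ℕ)+1 = 3 from rfl] at key
    refine key.trans ?_
    have h3 : (1:ℝ) - t ≥ 1/2 := by linarith
    rw [div_le_iff₀ (by linarith : (0:ℝ) < 1 - t)]
    nlinarith [pow_nonneg ht0 3]
  rw [gk_eq, abs_mul, abs_of_pos hc]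
  calc c * |Real.log (1 + t) - t + t ^ 2 / 2| ≤ c * (2 * t ^ 3) := by
        exact mul_le_mul_of_nonneg_left hbound hc.le
    _ ≤ 2 * y ^ 3 * (1 / c ^ 2) := by
        rw [ht_def]
        have : c * (2 * (y / c) ^ 3) = 2 * y ^ 3 * (1 / c ^ 2) := by
          field_simp
        rw [this]

lemma summable_gk {y : ℝ} (hy : 0 ≤ y) : Summable (fun k => gk k y) := by
  obtain ⟨N, hN⟩ := exists_nat_ge (2 * y)
  rw [← summable_nat_add_iff N]
  apply Summable.of_norm
  refine Summable.of_nonneg_of_le (fun k => norm_nonneg _) (fun k => ?_)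
    ((summable_inv_sq.mul_left (2 * y ^ 3)))
  have hk : 2 * y ≤ ((k + N : ℕ) : ℝ) + 1 := by
    push_cast; linarith [Nat.cast_nonneg (α := ℝ) k]
  refine (abs_gk_le hy (k + N) hk).trans ?_
  have h1 : ((k:ℝ)+1)^2 ≤ (((k+N:ℕ):ℝ)+1)^2 := by
    push_cast
    nlinarith [Nat.cast_nonneg (α := ℝ) k, Nat.cast_nonneg (α := ℝ) N]
  have h2 : (0:ℝ) < ((k:ℝ)+1)^2 := by positivity
  have h3 : (0:ℝ) < (((k+N:ℕ):ℝ)+1)^2 := by positivity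
  have := one_div_le_one_div_of_le h2 h1
  have hy3 : (0:ℝ) ≤ 2 * y ^ 3 := by positivity
  nlinarith

/-- Euler/Weierstrass series for `log Γ(1+y)`. -/
lemma hasSum_tk {y : ℝ} (hy : 0 < y) :
    HasSum (fun k => tk k y) (Real.log (Real.Gamma (1 + y)) + γ * y) := by
  rw [hasSum_iff_tendsto_nat_of_nonneg (fun k => tk_nonneg k hy.le)]
  have hpart : ∀ n : ℕ, 1 ≤ n → ∑ k ∈ Finset.range n, tk k y
      = y * ((harmonic n : ℝ) - Real.log n) + Real.log ((1 + y + (n:ℝ)) / n)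
        + Real.log (Real.GammaSeq (1 + y) n) := by
    intro n hn
    have hn0 : (0:ℝ) < n := by exact_mod_cast hn
    have hsum : ∑ k ∈ Finset.range n, tk k y
        = y * (harmonic n : ℝ) + Real.log (n.factorial : ℝ)
          - ∑ k ∈ Finset.range n, Real.log (1 + y + k) := by
      have h1 : ∀ k : ℕ, tk k y
          = y / ((k:ℝ)+1) + Real.log ((k:ℝ)+1) - Real.log (1 + y + k) := by
        intro k
        have hc : (0:ℝ) < (k:ℝ)+1 := by positivity
        have hky : (0:ℝ) < 1 + y + k := by positivity
        have harg : 1 + y / ((k:ℝ)+1) = (1 + y + k) / ((k:ℝ)+1) := by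
          field_simp; ring
        rw [tk, harg, Real.log_div hky.ne' hc.ne']
        ring
      have hA : ∑ k ∈ Finset.range n, y / ((k:ℝ)+1) = y * (harmonic n : ℝ) := by
        have hh : ((harmonic n : ℚ) : ℝ) = ∑ k ∈ Finset.range n, (((k:ℝ)+1))⁻¹ := by
          rw [harmonic]; push_cast; rfl
        rw [hh, Finset.mul_sum]
        exact Finset.sum_congr rfl fun k _ => by rw [div_eq_mul_inv]
      have hB : ∑ k ∈ Finset.range n, Real.log ((k:ℝ)+1) = Real.log (n.factorial : ℝ) := by
        rw [← Real.log_prod (fun k _ => by positivity)]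
        congr 1
        have := Finset.prod_range_add_one_eq_factorial n
        exact_mod_cast congrArg (Nat.cast : ℕ → ℝ) this
      simp only [h1]
      rw [Finset.sum_sub_distrib, Finset.sum_add_distrib, hA, hB]
    have hGS : Real.log (Real.GammaSeq (1 + y) n)
        = (1 + y) * Real.log n + Real.log (n.factorial : ℝ)
          - (∑ k ∈ Finset.range n, Real.log (1 + y + k)) - Real.log (1 + y + n) := by
      rw [Real.GammaSeq]
      have hfac : (0:ℝ) < (n.factorial : ℝ) := by exact_mod_cast n.factorial_pos
      have hprod : (0:ℝ) < ∏ j ∈ Finset.range (n + 1), (1 + y + j) := by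
        apply Finset.prod_pos; intro j _; positivity
      have hrpow : (0:ℝ) < (n:ℝ) ^ (1 + y : ℝ) := Real.rpow_pos_of_pos hn0 _
      rw [Real.log_div (by positivity) hprod.ne', Real.log_mul hrpow.ne' hfac.ne',
        Real.log_rpow hn0, Real.log_prod (fun j _ => by positivity),
        Finset.sum_range_succ]
      ring
    rw [hsum, hGS, Real.log_div (by positivity) hn0.ne']
    ring
  have hΓpos : 0 < Real.Gamma (1 + y) := Real.Gamma_pos_of_pos (by linarith)
  have T1 : Tendsto (fun n : ℕ => y * ((harmonic n : ℝ) - Real.log n)) atTop (𝓝 (y * γ)) :=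
    Real.tendsto_harmonic_sub_log.const_mul y
  have T2 : Tendsto (fun n : ℕ => Real.log ((1 + y + (n:ℝ)) / n)) atTop (𝓝 0) := by
    have h0 : Tendsto (fun n : ℕ => 1 + (1 + y) / (n:ℝ)) atTop (𝓝 (1 + 0)) :=
      tendsto_const_nhds.add (tendsto_const_nhds.div_atTop tendsto_natCast_atTop_atTop)
    rw [add_zero] at h0
    have h1 : Tendsto (fun n : ℕ => ((1 + y + (n:ℝ)) / n)) atTop (𝓝 1) := by
      apply h0.congr'
      filter_upwards [eventually_ne_atTop 0] with n hn
      have hn0 : ((n:ℝ)) ≠ 0 := Nat.cast_ne_zero.mpr hn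
      field_simp
      ring
    simpa using h1.log one_ne_zero
  have T3 : Tendsto (fun n : ℕ => Real.log (Real.GammaSeq (1 + y) n)) atTop
      (𝓝 (Real.log (Real.Gamma (1 + y)))) :=
    (Real.GammaSeq_tendsto_Gamma (1 + y)).log hΓpos.ne'
  have Tall := (T1.add T2).add T3
  rw [add_zero] at Tall
  rw [show Real.log (Real.Gamma (1 + y)) + γ * y
      = y * γ + 0 + Real.log (Real.Gamma (1 + y)) from by ring]
  rw [← add_zero (y * γ)] at Tall
  apply Tall.congr'
  filter_upwards [eventually_ge_atTop 1] with n hn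
  exact (hpart n hn).symm

/-- Logarithm of the Barnes G-function via the series of `gk`. -/
lemma barnesG_eq {y : ℝ} (hy : 0 ≤ y) :
    barnesG (1 + y) = Real.exp ((y / 2) * Real.log (2 * Real.pi)
      - (y + y ^ 2 * (1 + γ)) / 2 + ∑' k, gk k y) := by
  have hsum : Summable (fun k => gk k y) := summable_gk hy
  have hexp : ∀ k : ℕ, Real.exp (gk k y)
      = (1 + y / ((k : ℝ) + 1)) ^ (k + 1) * Real.exp (y ^ 2 / (2 * ((k : ℝ) + 1)) - y) := by
    intro k
    have hc : (0:ℝ) < (k:ℝ)+1 := by positivity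
    have h1 : (0:ℝ) < 1 + y / ((k:ℝ)+1) := by positivity
    rw [gk, add_sub_assoc, Real.exp_add]
    congr 1
    rw [show ((k:ℝ)+1) * Real.log (1 + y / ((k:ℝ)+1))
        = ((k+1 : ℕ) : ℝ) * Real.log (1 + y / ((k:ℝ)+1)) from by push_cast; ring,
      Real.exp_nat_mul, Real.exp_log h1]
  have hprod : HasProd
      (fun k : ℕ => (1 + y / ((k : ℝ) + 1)) ^ (k + 1)
        * Real.exp (y ^ 2 / (2 * ((k : ℝ) + 1)) - y))
      (Real.exp (∑' k, gk k y)) := by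
    have h := hsum.hasSum.rexp
    exact h.congr_fun (fun k => (hexp k).symm)
  rw [barnesG]
  simp only [show (1:ℝ) + y - 1 = y from by ring]
  rw [hprod.tprod_eq, Real.rpow_def_of_pos (by positivity : (0:ℝ) < 2 * Real.pi),
    ← Real.exp_add, ← Real.exp_add]
  congr 1
  ring

lemma hasDerivAt_T (k : ℕ) {y : ℝ} (hy : 0 ≤ y) :
    HasDerivAt (fun u => u * tk k u - gk k u) (tk k y) y := by
  have hc : (0:ℝ) < (k:ℝ)+1 := by positivity
  have h1 : (0:ℝ) < 1 + y / ((k:ℝ)+1) := by positivity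
  have hlin : HasDerivAt (fun u : ℝ => 1 + u / ((k:ℝ)+1)) (1 / ((k:ℝ)+1)) y := by
    simpa using ((hasDerivAt_id y).div_const ((k:ℝ)+1)).const_add 1
  have hlog : HasDerivAt (fun u : ℝ => Real.log (1 + u / ((k:ℝ)+1)))
      ((1 / ((k:ℝ)+1)) / (1 + y / ((k:ℝ)+1))) y := hlin.log h1.ne'
  have htk : HasDerivAt (fun u : ℝ => tk k u)
      (1 / ((k:ℝ)+1) - (1 / ((k:ℝ)+1)) / (1 + y / ((k:ℝ)+1))) y := by
    exact (((hasDerivAt_id y).div_const ((k:ℝ)+1)).sub hlog)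
  have hgk : HasDerivAt (fun u : ℝ => gk k u)
      (((k:ℝ)+1) * ((1 / ((k:ℝ)+1)) / (1 + y / ((k:ℝ)+1))) + 2 * y / (2 * ((k:ℝ)+1)) - 1) y := by
    have hsq : HasDerivAt (fun u : ℝ => u ^ 2 / (2 * ((k:ℝ)+1)))
        (2 * y / (2 * ((k:ℝ)+1))) y := by
      simpa using (((hasDerivAt_pow 2 y)).div_const (2 * ((k:ℝ)+1)))
    exact ((hlog.const_mul ((k:ℝ)+1)).add hsq).sub (hasDerivAt_id y)
  have := ((hasDerivAt_id y).mul htk).sub hgk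
  refine this.congr_deriv ?_
  have h1' : (1 + y / ((k:ℝ)+1)) ≠ 0 := h1.ne'
  simp only [tk, id_eq]
  field_simp
  ring

lemma tk_zero (k : ℕ) : tk k 0 = 0 := by simp [tk]

lemma gk_zero (k : ℕ) : gk k 0 = 0 := by simp [gk]

lemma continuousOn_tk (k : ℕ) : ContinuousOn (fun x => tk k x) (Ici (0:ℝ)) := by
  have hc : (0:ℝ) < (k:ℝ)+1 := by positivity
  apply ContinuousOn.sub
  · exact (continuousOn_id.div_const _)
  · apply ContinuousOn.log
    · fun_prop
    · intro x hx
      have : (0:ℝ) ≤ x := hx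
      positivity

lemma integral_hk (k : ℕ) {z : ℝ} (hz : 0 < z) :
    ∫ x in (0:ℝ)..z, (tk k (x / 2) - tk k x)
      = z * (tk k (z / 2) - tk k z) - 2 * gk k (z / 2) + gk k z := by
  have huIcc : uIcc (0:ℝ) z = Icc 0 z := uIcc_of_le hz.le
  have hderiv : ∀ x ∈ uIcc (0:ℝ) z,
      HasDerivAt (fun u => 2 * ((u / 2) * tk k (u / 2) - gk k (u / 2)) - (u * tk k u - gk k u))
        (tk k (x / 2) - tk k x) x := by
    intro x hx
    rw [huIcc, mem_Icc] at hx
    have h2 : HasDerivAt (fun u : ℝ => u / 2) (1 / 2) x := by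
      simpa using (hasDerivAt_id x).div_const 2
    have hT2 := ((hasDerivAt_T k (by linarith : (0:ℝ) ≤ x / 2)).comp x h2).const_mul 2
    have hT1 := hasDerivAt_T k hx.1
    refine (hT2.sub hT1).congr_deriv ?_
    ring
  have hcont : ContinuousOn (fun x => tk k (x / 2) - tk k x) (uIcc (0:ℝ) z) := by
    rw [huIcc]
    apply ContinuousOn.sub
    · exact (continuousOn_tk k).comp (continuousOn_id.div_const 2)
        (fun x hx => by simpa using by linarith [hx.1] : MapsTo _ _ _)
    · exact (continuousOn_tk k).mono (Icc_subset_Ici_self)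
  rw [integral_eq_sub_of_hasDerivAt hderiv (hcont.intervalIntegrable)]
  simp [tk_zero, gk_zero]
  ring

/-- The logarithmic derivative of `Γ`, as a real function. -/
noncomputable def dlG (s : ℝ) : ℝ := (deriv Complex.Gamma (s : ℂ)).re / Real.Gamma s

lemma ofReal_ne_neg_nat {s : ℝ} (hs : 0 < s) : ∀ m : ℕ, (s : ℂ) ≠ -m := by
  intro m h
  have : (0:ℝ) ≤ (m:ℝ) := Nat.cast_nonneg m
  linarith [show s = -(m:ℝ) from by exact_mod_cast h]

lemma hasDerivAt_logGamma {s : ℝ} (hs : 0 < s) :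
    HasDerivAt (fun u => Real.log (Real.Gamma u)) (dlG s) s := by
  have h1 : HasDerivAt Real.Gamma ((deriv Complex.Gamma (s : ℂ)).re) s := by
    have h := (Complex.differentiableAt_Gamma _ (ofReal_ne_neg_nat hs)).hasDerivAt
    exact h.real_of_complex
  have hΓ : Real.Gamma s ≠ 0 := (Real.Gamma_pos_of_pos hs).ne'
  exact h1.log hΓ

lemma continuousOn_dlG : ContinuousOn dlG (Ioi (0:ℝ)) := by
  have hU : IsOpen {s : ℂ | 0 < s.re} := isOpen_lt continuous_const Complex.continuous_re
  have hd : DifferentiableOn ℂ Complex.Gamma {s : ℂ | 0 < s.re} := by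
    intro s hs
    refine (Complex.differentiableAt_Gamma s ?_).differentiableWithinAt
    intro m h
    rw [h] at hs
    simp only [mem_setOf_eq, Complex.neg_re, Complex.natCast_re] at hs
    have : (0:ℝ) ≤ (m:ℝ) := Nat.cast_nonneg m
    linarith
  have han : AnalyticOnNhd ℂ Complex.Gamma {s : ℂ | 0 < s.re} := hd.analyticOnNhd hU
  have hder : ContinuousOn (deriv Complex.Gamma) {s : ℂ | 0 < s.re} :=
    (han.deriv).continuousOn
  have hnum : ContinuousOn (fun s : ℝ => (deriv Complex.Gamma (s : ℂ)).re) (Ioi 0) := by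
    apply Complex.continuous_re.comp_continuousOn
    exact hder.comp Complex.continuous_ofReal.continuousOn
      (fun s hs => by simpa using hs)
  have hden : ContinuousOn Real.Gamma (Ioi (0:ℝ)) := fun s hs =>
    (Real.differentiableAt_Gamma (fun m => by
      have : (0:ℝ) ≤ (m:ℝ) := Nat.cast_nonneg m
      have hs' : (0:ℝ) < s := hs
      intro h; linarith [show s = -(m:ℝ) from h])).continuousAt.continuousWithinAt
  exact hnum.div hden (fun s hs => (Real.Gamma_pos_of_pos hs).ne')

lemma hasDerivAt_f0 {x : ℝ} (hx : -1 < x) :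
    HasDerivAt (fun y => Real.log (Real.Gamma (1 + y / 2)) - Real.log (Real.Gamma (1 + y)))
      ((1 / 2) * dlG (1 + x / 2) - dlG (1 + x)) x := by
  have h2 : HasDerivAt (fun y : ℝ => 1 + y / 2) (1 / 2) x := by
    simpa using ((hasDerivAt_id x).div_const 2).const_add 1
  have h3 : HasDerivAt (fun y : ℝ => 1 + y) 1 x := by
    simpa using (hasDerivAt_id x).const_add 1
  have hA := (hasDerivAt_logGamma (by linarith : (0:ℝ) < 1 + x / 2)).comp x h2
  have hB := (hasDerivAt_logGamma (by linarith : (0:ℝ) < 1 + x)).comp x h3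
  exact (hA.sub hB).congr_deriv (by ring)

end BarnesAux

/-- For `z > 0`,
`∫_0^z x · d/dx [log Γ(1+x/2) - log Γ(1+x)] dx = -z²/4 + log(G(1+z/2)²/G(1+z))`. -/
theorem integral_x_mul_deriv_log_Gamma_ratio (z : ℝ) (hz : 0 < z) :
    ∫ x in (0 : ℝ)..z,
        x * deriv (fun y => Real.log (Real.Gamma (1 + y / 2))
          - Real.log (Real.Gamma (1 + y))) x
      = -z ^ 2 / 4 + Real.log (barnesG (1 + z / 2) ^ 2 / barnesG (1 + z)) := by
  classical
  open BarnesAux in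
  have hz2 : 0 < z / 2 := by linarith
  set f0 : ℝ → ℝ := fun y => Real.log (Real.Gamma (1 + y / 2))
    - Real.log (Real.Gamma (1 + y)) with hf0
  have huIcc : Set.uIcc (0:ℝ) z = Set.Icc 0 z := Set.uIcc_of_le hz.le
  have hd : ∀ x ∈ Set.uIcc (0:ℝ) z,
      HasDerivAt f0 ((1/2) * dlG (1 + x/2) - dlG (1+x)) x := by
    intro x hx
    rw [huIcc, Set.mem_Icc] at hx
    exact hasDerivAt_f0 (by linarith)
  have hEq : Set.EqOn (fun x => x * deriv f0 x)
      (fun x => x * ((1/2) * dlG (1 + x/2) - dlG (1+x))) (Set.uIcc 0 z) :=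
    fun x hx => by beta_reduce; rw [(hd x hx).deriv]
  rw [intervalIntegral.integral_congr hEq]
  have hdc : ContinuousOn (fun x => (1/2) * dlG (1 + x/2) - dlG (1+x))
      (Set.uIcc (0:ℝ) z) := by
    rw [huIcc]
    have c1 : ContinuousOn (fun x : ℝ => dlG (1 + x/2)) (Set.Icc 0 z) := by
      refine continuousOn_dlG.comp (by fun_prop) ?_
      intro x hx
      have h0 := hx.1
      simp only [Set.mem_Ioi]
      linarith
    have c2 : ContinuousOn (fun x : ℝ => dlG (1 + x)) (Set.Icc 0 z) := by
      refine continuousOn_dlG.comp (by fun_prop) ?_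
      intro x hx
      have h0 := hx.1
      simp only [Set.mem_Ioi]
      linarith
    exact (c1.const_smul (1/2 : ℝ)).sub c2
  have hu : ∀ x ∈ Set.uIcc (0:ℝ) z, HasDerivAt (fun x : ℝ => x) 1 x :=
    fun x _ => hasDerivAt_id x
  rw [intervalIntegral.integral_mul_deriv_eq_deriv_mul hu hd
    intervalIntegrable_const hdc.intervalIntegrable]
  have hf0cont : ContinuousOn f0 (Set.uIcc 0 z) :=
    fun x hx => (hd x hx).continuousAt.continuousWithinAt
  have hf0c : IntervalIntegrable f0 volume 0 z := hf0cont.intervalIntegrable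
  -- swap sum and integral
  have huIoc : Set.uIoc (0:ℝ) z = Set.Ioc 0 z := Set.uIoc_of_le hz.le
  have hswap : HasSum (fun k => ∫ x in (0:ℝ)..z, (tk k (x/2) - tk k x))
      (∫ x in (0:ℝ)..z, (f0 x - Real.eulerMascheroniConstant * x / 2)) := by
    refine intervalIntegral.hasSum_integral_of_dominated_convergence
      (F := fun k x => tk k (x/2) - tk k x)
      (bound := fun k (_ : ℝ) => 2 * z^2 * (1/((k:ℝ)+1)^2)) ?_ ?_ ?_ ?_ ?_
    · intro k
      apply ContinuousOn.aestronglyMeasurable ?_ measurableSet_uIoc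
      rw [huIoc]
      apply ContinuousOn.sub
      · refine (continuousOn_tk k).comp (continuousOn_id.div_const 2) ?_
        intro x hx
        have h0 : (0:ℝ) < x := hx.1
        show id x / 2 ∈ Set.Ici (0:ℝ)
        simp only [Set.mem_Ici, id_eq]
        linarith
      · exact (continuousOn_tk k).mono (fun x hx => le_of_lt hx.1)
    · intro k
      apply Filter.Eventually.of_forall
      intro t ht
      rw [huIoc] at ht
      have ht0 : 0 < t := ht.1
      have htz : t ≤ z := ht.2
      have h1 : 0 ≤ tk k (t/2) := tk_nonneg k (by linarith)
      have h2 : 0 ≤ tk k t := tk_nonneg k ht0.le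
      have b1 : tk k (t/2) ≤ (t/2)^2 * (1/((k:ℝ)+1)^2) := tk_le k (by linarith)
      have b2 : tk k t ≤ t^2 * (1/((k:ℝ)+1)^2) := tk_le k ht0.le
      have hsq : (0:ℝ) ≤ 1/((k:ℝ)+1)^2 := by positivity
      have htz2 : t^2 ≤ z^2 := by nlinarith
      have hmul := mul_le_mul_of_nonneg_right htz2 hsq
      rw [Real.norm_eq_abs, abs_le]
      constructor
      · nlinarith
      · nlinarith
    · exact Filter.Eventually.of_forall fun t _ => summable_inv_sq.mul_left _
    · exact intervalIntegrable_const
    · apply Filter.Eventually.of_forall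
      intro t ht
      rw [huIoc] at ht
      have h2 := hasSum_tk (show 0 < t/2 by linarith [ht.1])
      have h1 := hasSum_tk ht.1
      have h := h2.sub h1
      have hval : f0 t - Real.eulerMascheroniConstant * t / 2
          = (Real.log (Real.Gamma (1 + t / 2)) + Real.eulerMascheroniConstant * (t / 2))
            - (Real.log (Real.Gamma (1 + t)) + Real.eulerMascheroniConstant * t) := by
        rw [hf0]; ring
      beta_reduce
      rw [hval]
      exact h
  have hIk : (fun k => ∫ x in (0:ℝ)..z, (tk k (x/2) - tk k x))
      = fun k => z * (tk k (z/2) - tk k z) - 2 * gk k (z/2) + gk k z :=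
    funext fun k => integral_hk k hz
  rw [hIk] at hswap
  have hs2 := hasSum_tk hz2
  have hs1 := hasSum_tk hz
  have hg2 := (summable_gk hz2.le).hasSum
  have hg1 := (summable_gk hz.le).hasSum
  have hterm := (((hs2.sub hs1).mul_left z).sub (hg2.mul_left 2)).add hg1
  have hint_eq := hswap.unique hterm
  have hγint : ∫ x in (0:ℝ)..z, (f0 x - Real.eulerMascheroniConstant * x / 2)
      = (∫ x in (0:ℝ)..z, f0 x) - Real.eulerMascheroniConstant * z^2 / 4 := by
    rw [intervalIntegral.integral_sub hf0c
      ((by fun_prop : Continuous fun x : ℝ =>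
        Real.eulerMascheroniConstant * x / 2).intervalIntegrable 0 z)]
    congr 1
    have harr : (fun x : ℝ => Real.eulerMascheroniConstant * x / 2)
        = fun x : ℝ => (Real.eulerMascheroniConstant / 2) * x := by
      funext x; ring
    rw [harr, intervalIntegral.integral_const_mul, integral_id]
    ring
  rw [hγint] at hint_eq
  -- right-hand side via the Barnes product formula
  rw [barnesG_eq hz2.le, barnesG_eq hz.le,
    Real.log_div (pow_ne_zero 2 (Real.exp_ne_zero _)) (Real.exp_ne_zero _),
    Real.log_pow, Real.log_exp, Real.log_exp]
  simp only [one_mul, hf0]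
  push_cast
  linear_combination -hint_eq
end

section
/- Fix real α > 0 and real β with |β| < 1 + α/2. Then the integral from 0 to β of [ (α/2) d/dx log( Γ(1 + α/2 - x) Γ(1 + α/2 + x) ) + x d/dx log( Γ(1 + α/2 + x) / Γ(1 + α/2 - x) ) - 2x ] dx equals log( G(1 + α/2 + β) G(1 + α/2 - β) / G(1 + α/2)^2 ). -/
open MeasureTheory Filter Set

namespace BarnesAux

open Real Finset Topology

local notation "γ" => Real.eulerMascheroniConstant

noncomputable def Wfun (z : ℝ) : ℝ :=
  -Real.log z - γ * z + ∑' k : ℕ, (z / ((k : ℝ) + 1) - Real.log (1 + z / ((k : ℝ) + 1)))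

noncomputable def Afun (t : ℝ) : ℝ := ∑' k : ℕ, (1 / ((k : ℝ) + 1) - 1 / ((k : ℝ) + 1 + t))

noncomputable def psiR (z : ℝ) : ℝ := -1 / z - γ + Afun z

noncomputable def Qterm (k : ℕ) (t : ℝ) : ℝ :=
  ((k : ℝ) + 1) * Real.log (1 + t / ((k : ℝ) + 1)) + t ^ 2 / (2 * ((k : ℝ) + 1)) - t

noncomputable def Qfun (t : ℝ) : ℝ := ∑' k : ℕ, Qterm k t

noncomputable def Dfun (t : ℝ) : ℝ := ∑' k : ℕ, t ^ 2 / (((k : ℝ) + 1) * ((k : ℝ) + 1 + t))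

noncomputable def Lfun (t : ℝ) : ℝ :=
  t / 2 * Real.log (2 * Real.pi) - (t + t ^ 2 * (1 + γ)) / 2 + Qfun t

noncomputable def Lp (t : ℝ) : ℝ :=
  Real.log (2 * Real.pi) / 2 - 1 / 2 - t * (1 + γ) + Dfun t

lemma summable_base (C : ℝ) : Summable (fun k : ℕ => C / ((k : ℝ) + 1) ^ 2) := by
  have h : Summable (fun k : ℕ => 1 / ((k : ℝ) + 1) ^ 2) := by
    have := (summable_nat_add_iff (f := fun n : ℕ => 1 / (n : ℝ) ^ 2) 1).mpr
      (Real.summable_one_div_nat_pow.mpr one_lt_two)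
    exact this.congr fun k => by push_cast; ring
  simpa [div_eq_mul_inv, mul_comm] using h.mul_left C

lemma eventually_half (t : ℝ) : ∀ᶠ k : ℕ in atTop, |t| / ((k : ℝ) + 1) ≤ 1 / 2 := by
  filter_upwards [eventually_ge_atTop ⌈2 * |t|⌉₊] with k hk
  have h1 : 2 * |t| ≤ (k : ℝ) + 1 := by
    calc 2 * |t| ≤ (⌈2 * |t|⌉₊ : ℝ) := Nat.le_ceil _
    _ ≤ (k : ℝ) := by exact_mod_cast hk
    _ ≤ (k : ℝ) + 1 := by linarith
  rw [div_le_div_iff₀ (by positivity) two_pos]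
  linarith

lemma log_bound {u : ℝ} (hu : |u| < 1) : |Real.log (1 + u) - u| ≤ u ^ 2 / (1 - |u|) := by
  have := Real.abs_log_sub_add_sum_range_le (x := -u) (by rwa [abs_neg]) 1
  simp only [Finset.sum_range_one, abs_neg] at this
  rw [show (1 : ℝ) - -u = 1 + u from by ring] at this
  norm_num at this
  rw [show -u + Real.log (1 + u) = Real.log (1 + u) - u from by ring] at this
  exact this

lemma log_bound2 {u : ℝ} (hu : |u| < 1) :
    |Real.log (1 + u) - u + u ^ 2 / 2| ≤ |u| ^ 3 / (1 - |u|) := by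
  have := Real.abs_log_sub_add_sum_range_le (x := -u) (by rwa [abs_neg]) 2
  simp only [abs_neg] at this
  have hs : (∑ i ∈ Finset.range 2, (-u) ^ (i + 1) / (i + 1)) = -u + u ^ 2 / 2 := by
    simp [Finset.sum_range_succ]; ring
  rw [hs, show (1 : ℝ) - -u = 1 + u from by ring,
    show -u + u ^ 2 / 2 + Real.log (1 + u) = Real.log (1 + u) - u + u ^ 2 / 2 from by ring]
    at this
  norm_num at this ⊢
  exact this

lemma summable_W (z : ℝ) :
    Summable (fun k : ℕ => z / ((k : ℝ) + 1) - Real.log (1 + z / ((k : ℝ) + 1))) := by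
  apply Summable.of_norm_bounded_eventually_nat (summable_base (2 * z ^ 2))
  filter_upwards [eventually_half z] with k hk
  set u := z / ((k : ℝ) + 1) with hu
  have hk1 : (0 : ℝ) < (k : ℝ) + 1 := by positivity
  have hau : |u| ≤ 1 / 2 := by rwa [hu, abs_div, abs_of_pos hk1]
  have h1 : |Real.log (1 + u) - u| ≤ u ^ 2 / (1 - |u|) := log_bound (by linarith)
  have h2 : u ^ 2 / (1 - |u|) ≤ 2 * z ^ 2 / ((k : ℝ) + 1) ^ 2 := by
    have : u ^ 2 = z ^ 2 / ((k : ℝ) + 1) ^ 2 := by rw [hu, div_pow]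
    have hden : (0 : ℝ) < 1 - |u| := by linarith
    rw [this, div_div, div_le_div_iff₀ (by positivity) (by positivity)]
    nlinarith [mul_nonneg (sq_nonneg z) (sq_nonneg ((k : ℝ) + 1))]
  calc ‖u - Real.log (1 + u)‖ = |Real.log (1 + u) - u| := by rw [Real.norm_eq_abs, abs_sub_comm]
    _ ≤ 2 * z ^ 2 / ((k : ℝ) + 1) ^ 2 := h1.trans h2

lemma summable_A (t : ℝ) :
    Summable (fun k : ℕ => 1 / ((k : ℝ) + 1) - 1 / ((k : ℝ) + 1 + t)) := by
  apply Summable.of_norm_bounded_eventually_nat (summable_base (2 * |t|))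
  filter_upwards [eventually_half t] with k hk
  have hk1 : (0 : ℝ) < (k : ℝ) + 1 := by positivity
  have habs : |t| ≤ ((k : ℝ) + 1) / 2 := by
    rw [div_le_iff₀ hk1] at hk; linarith
  have hpos : ((k : ℝ) + 1) / 2 ≤ (k : ℝ) + 1 + t := by
    have := abs_le.mp habs; linarith [this.1]
  have hpos2 : (0 : ℝ) < (k : ℝ) + 1 + t :=
    lt_of_lt_of_le (by positivity : (0:ℝ) < ((k : ℝ) + 1) / 2) hpos
  have hne : ((k : ℝ) + 1 + t) ≠ 0 := ne_of_gt hpos2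
  have heq : 1 / ((k : ℝ) + 1) - 1 / ((k : ℝ) + 1 + t) = t / (((k : ℝ) + 1) * ((k : ℝ) + 1 + t)) := by
    field_simp; ring
  have hmul : (0 : ℝ) < ((k : ℝ) + 1) * ((k : ℝ) + 1 + t) := by positivity
  rw [Real.norm_eq_abs, heq, abs_div, abs_of_pos hmul]
  calc |t| / (((k : ℝ) + 1) * ((k : ℝ) + 1 + t))
      ≤ |t| / (((k : ℝ) + 1) * (((k : ℝ) + 1) / 2)) := by gcongr
    _ = 2 * |t| / ((k : ℝ) + 1) ^ 2 := by field_simp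
  

lemma summable_Q (t : ℝ) : Summable (fun k : ℕ => Qterm k t) := by
  apply Summable.of_norm_bounded_eventually_nat (summable_base (2 * |t| ^ 3))
  filter_upwards [eventually_half t] with k hk
  set u := t / ((k : ℝ) + 1) with hu
  have hk1 : (0 : ℝ) < (k : ℝ) + 1 := by positivity
  have hau : |u| ≤ 1 / 2 := by rwa [hu, abs_div, abs_of_pos hk1]
  have heq : Qterm k t = ((k : ℝ) + 1) * (Real.log (1 + u) - u + u ^ 2 / 2) := by
    rw [Qterm, hu]; field_simp; ring
  have h1 : |Real.log (1 + u) - u + u ^ 2 / 2| ≤ |u| ^ 3 / (1 - |u|) := log_bound2 (by linarith)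
  have h2 : |u| ^ 3 / (1 - |u|) ≤ 2 * |u| ^ 3 := by
    rw [div_le_iff₀ (by linarith)]
    nlinarith [abs_nonneg u, pow_nonneg (abs_nonneg u) 3]
  have h3 : |u| ^ 3 = |t| ^ 3 / ((k : ℝ) + 1) ^ 3 := by
    rw [hu, abs_div, abs_of_pos hk1, div_pow]
  rw [Real.norm_eq_abs, heq, abs_mul, abs_of_pos hk1]
  calc ((k : ℝ) + 1) * |Real.log (1 + u) - u + u ^ 2 / 2|
      ≤ ((k : ℝ) + 1) * (2 * |u| ^ 3) := by
        exact mul_le_mul_of_nonneg_left (h1.trans h2) (le_of_lt hk1)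
    _ = 2 * |t| ^ 3 / ((k : ℝ) + 1) ^ 2 := by rw [h3]; field_simp


lemma hasDerivAt_Wsum {z : ℝ} (hz : 0 < z) :
    HasDerivAt (fun y => ∑' k : ℕ, (y / ((k : ℝ) + 1) - Real.log (1 + y / ((k : ℝ) + 1))))
      (∑' k : ℕ, (1 / ((k : ℝ) + 1) - 1 / ((k : ℝ) + 1 + z))) z := by
  apply hasDerivAt_tsum_of_isPreconnected (u := fun k : ℕ => (z + 1) / ((k : ℝ) + 1) ^ 2)
    (summable_base _) (isOpen_Ioo (a := z / 2) (b := z + 1)) (isPreconnected_Ioo)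
    (g := fun k y => y / ((k : ℝ) + 1) - Real.log (1 + y / ((k : ℝ) + 1)))
    (g' := fun k y => 1 / ((k : ℝ) + 1) - 1 / ((k : ℝ) + 1 + y))
    (y₀ := z) ?_ ?_ ?_ ?_ ?_
  · intro k y hy
    obtain ⟨hy1, hy2⟩ := hy
    have hk1 : (0 : ℝ) < (k : ℝ) + 1 := by positivity
    have hy0 : 0 < y := lt_trans (by positivity) hy1
    have hpos : 0 < 1 + y / ((k : ℝ) + 1) := by positivity
    have h1 : HasDerivAt (fun y : ℝ => 1 + y / ((k : ℝ) + 1)) (1 / ((k : ℝ) + 1)) y := by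
      simpa using ((hasDerivAt_id y).div_const ((k : ℝ) + 1)).const_add 1
    have h2 := ((hasDerivAt_id y).div_const ((k : ℝ) + 1)).sub (h1.log (ne_of_gt hpos))
    refine h2.congr_deriv ?_
    field_simp
  · intro k y hy
    obtain ⟨hy1, hy2⟩ := hy
    have hk1 : (0 : ℝ) < (k : ℝ) + 1 := by positivity
    have hy0 : 0 < y := lt_trans (by positivity) hy1
    have hden : (0 : ℝ) < (k : ℝ) + 1 + y := by positivity
    have heq : 1 / ((k : ℝ) + 1) - 1 / ((k : ℝ) + 1 + y)
        = y / (((k : ℝ) + 1) * ((k : ℝ) + 1 + y)) := by field_simp; ring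
    show ‖1 / ((k : ℝ) + 1) - 1 / ((k : ℝ) + 1 + y)‖ ≤ (z + 1) / ((k : ℝ) + 1) ^ 2
    rw [Real.norm_eq_abs, heq, abs_of_pos (by positivity)]
    calc y / (((k : ℝ) + 1) * ((k : ℝ) + 1 + y))
        ≤ (z + 1) / (((k : ℝ) + 1) * ((k : ℝ) + 1)) := by
          apply div_le_div₀ (by linarith) (by linarith) (by positivity) (by nlinarith)
    _ = (z + 1) / ((k : ℝ) + 1) ^ 2 := by ring
  · exact ⟨by linarith, by linarith⟩
  · exact summable_W z
  · exact ⟨by linarith, by linarith⟩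

lemma hasDerivAt_W {z : ℝ} (hz : 0 < z) : HasDerivAt Wfun (psiR z) z := by
  have h1 : HasDerivAt (fun y : ℝ => -Real.log y - γ * y) (-z⁻¹ - γ) z := by
    exact ((Real.hasDerivAt_log (ne_of_gt hz)).neg.sub ((hasDerivAt_id z).const_mul γ)).congr_deriv (by simp)
  have h2 := h1.add (hasDerivAt_Wsum hz)
  have : Wfun = fun y : ℝ => (-Real.log y - γ * y)
      + ∑' k : ℕ, (y / ((k : ℝ) + 1) - Real.log (1 + y / ((k : ℝ) + 1))) := rfl
  rw [this]
  refine h2.congr_deriv ?_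
  simp only [psiR, Afun, inv_eq_one_div]
  ring

lemma logGamma_eq {z : ℝ} (hz : 0 < z) : Real.log (Real.Gamma z) = Wfun z := by
  have hG : 0 < Real.Gamma z := Real.Gamma_pos_of_pos hz
  have h1 : Tendsto (fun n : ℕ => Real.log (Real.GammaSeq z n)) atTop
      (𝓝 (Real.log (Real.Gamma z))) :=
    ((Real.continuousAt_log (ne_of_gt hG)).tendsto).comp (Real.GammaSeq_tendsto_Gamma z)
  -- the explicit formula for log GammaSeq
  have key : ∀ n : ℕ, 1 ≤ n → Real.log (Real.GammaSeq z n)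
      = z * (Real.log n - (harmonic n : ℝ)) - Real.log z
        + ∑ k ∈ Finset.range n, (z / ((k : ℝ) + 1) - Real.log (1 + z / ((k : ℝ) + 1))) := by
    intro n hn
    have hn0 : (0 : ℝ) < (n : ℝ) := by exact_mod_cast hn
    have hfac : (0 : ℝ) < (Nat.factorial n : ℝ) := by exact_mod_cast n.factorial_pos
    have hprodpos : ∀ j ∈ Finset.range (n + 1), (0 : ℝ) < z + j := by
      intro j _; positivity
    have hprod : (0 : ℝ) < ∏ j ∈ Finset.range (n + 1), (z + (j : ℝ)) :=
      Finset.prod_pos hprodpos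
    rw [Real.GammaSeq, Real.log_div (by positivity) (ne_of_gt hprod),
      Real.log_mul (by positivity) (ne_of_gt hfac), Real.log_rpow hn0,
      Real.log_prod (fun j hj => ne_of_gt (hprodpos j hj))]
    have hfac2 : Real.log (Nat.factorial n : ℝ) = ∑ j ∈ Finset.range n, Real.log ((j : ℝ) + 1) := by
      rw [← Finset.prod_range_add_one_eq_factorial]
      push_cast
      rw [Real.log_prod]
      intro j _; positivity
    have hsum : ∑ j ∈ Finset.range (n + 1), Real.log (z + (j : ℝ))
        = Real.log z + ∑ j ∈ Finset.range n, Real.log (z + (j : ℝ) + 1) := by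
      rw [Finset.sum_range_succ']
      simp only [Nat.cast_zero, add_zero, Nat.cast_add, Nat.cast_one]
      rw [add_comm]
      congr 1
      apply Finset.sum_congr rfl
      intro j _
      ring_nf
    rw [hfac2, hsum]
    have hharm : (harmonic n : ℝ) = ∑ j ∈ Finset.range n, 1 / ((j : ℝ) + 1) := by
      simp only [harmonic]; push_cast; simp [one_div]
    rw [hharm]
    have hterm : ∀ j ∈ Finset.range n,
        Real.log (1 + z / ((j : ℝ) + 1)) = Real.log (z + (j : ℝ) + 1) - Real.log ((j : ℝ) + 1) := by
      intro j _
      have hj1 : (0 : ℝ) < (j : ℝ) + 1 := by positivity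
      rw [← Real.log_div (by positivity) (ne_of_gt hj1)]
      congr 1
      field_simp
      ring
    have e1 : ∑ k ∈ Finset.range n, (z / ((k : ℝ) + 1) - Real.log (1 + z / ((k : ℝ) + 1)))
        = z * (∑ j ∈ Finset.range n, 1 / ((j : ℝ) + 1))
          - (∑ j ∈ Finset.range n, Real.log (z + (j : ℝ) + 1)
            - ∑ j ∈ Finset.range n, Real.log ((j : ℝ) + 1)) := by
      rw [Finset.mul_sum, ← Finset.sum_sub_distrib, ← Finset.sum_sub_distrib]
      apply Finset.sum_congr rfl
      intro j hj
      rw [hterm j hj]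
      ring
    rw [e1]
    ring
  have h2 : Tendsto (fun n : ℕ => Real.log (Real.GammaSeq z n)) atTop (𝓝 (Wfun z)) := by
    have hA : Tendsto (fun n : ℕ => z * (Real.log n - (harmonic n : ℝ))) atTop (𝓝 (-(γ * z))) := by
      have := (Real.tendsto_harmonic_sub_log).neg.const_mul z
      simp only [neg_sub] at this
      convert this using 2
      ring
    have hB : Tendsto (fun n : ℕ => ∑ k ∈ Finset.range n,
        (z / ((k : ℝ) + 1) - Real.log (1 + z / ((k : ℝ) + 1)))) atTop
        (𝓝 (∑' k : ℕ, (z / ((k : ℝ) + 1) - Real.log (1 + z / ((k : ℝ) + 1))))) :=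
      (summable_W z).hasSum.tendsto_sum_nat
    have h3 := (hA.sub (tendsto_const_nhds (x := Real.log z))).add hB
    have h4 := h3.congr' (by
      filter_upwards [eventually_ge_atTop 1] with n hn
      exact (key n hn).symm)
    convert h4 using 2
    simp only [Wfun]
    ring
  have := tendsto_nhds_unique h1 h2
  exact this

lemma hasDerivAt_logGamma_s9 {z : ℝ} (hz : 0 < z) :
    HasDerivAt (fun y => Real.log (Real.Gamma y)) (psiR z) z := by
  apply (hasDerivAt_W hz).congr_of_eventuallyEq
  filter_upwards [eventually_gt_nhds hz] with y hy
  exact logGamma_eq hy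


lemma one_add_div_pos {t : ℝ} (ht : -1 < t) (k : ℕ) : 0 < 1 + t / ((k : ℝ) + 1) := by
  have hk0 : (0 : ℝ) ≤ (k : ℝ) := Nat.cast_nonneg k
  have hk1 : (0 : ℝ) < (k : ℝ) + 1 := by linarith
  rw [show (0 : ℝ) = 1 + (-1 : ℝ) from by ring]
  have : (-1 : ℝ) < t / ((k : ℝ) + 1) := by
    rw [lt_div_iff₀ hk1]; nlinarith
  linarith

lemma barnesG_eq_s9 {t : ℝ} (ht : -1 < t) : barnesG (1 + t) = Real.exp (Lfun t) := by
  have hprod : HasProd (fun k : ℕ => (1 + t / ((k : ℝ) + 1)) ^ (k + 1) *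
      Real.exp (t ^ 2 / (2 * ((k : ℝ) + 1)) - t)) (Real.exp (Qfun t)) := by
    have h2 := (summable_Q t).hasSum.rexp
    apply HasProd.congr_fun h2
    intro k
    have hu := one_add_div_pos ht k
    simp only [Function.comp_apply, Qterm]
    rw [show ((k : ℝ) + 1) * Real.log (1 + t / ((k : ℝ) + 1)) + t ^ 2 / (2 * ((k : ℝ) + 1)) - t
        = ((k : ℝ) + 1) * Real.log (1 + t / ((k : ℝ) + 1)) + (t ^ 2 / (2 * ((k : ℝ) + 1)) - t)
        from by ring, Real.exp_add]
    congr 1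
    rw [show ((k : ℝ) + 1) = ((k + 1 : ℕ) : ℝ) from by push_cast; ring, ← Real.log_pow]
    have hu' : (0 : ℝ) < 1 + t / ((k + 1 : ℕ) : ℝ) := by push_cast; exact hu
    exact (Real.exp_log (pow_pos hu' _)).symm
  simp only [barnesG, add_sub_cancel_left]
  rw [hprod.tprod_eq, Real.rpow_def_of_pos (by positivity)]
  rw [← Real.exp_add, ← Real.exp_add]
  congr 1
  simp only [Lfun]
  ring

lemma barnesG_pos {t : ℝ} (ht : -1 < t) : 0 < barnesG (1 + t) := by
  rw [barnesG_eq_s9 ht]; exact Real.exp_pos _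

lemma Dterm_bound {l M x : ℝ} (hl : -1 < l) {k : ℕ} (hx1 : l < x) (hxM : |x| ≤ M) :
    ‖x ^ 2 / (((k : ℝ) + 1) * ((k : ℝ) + 1 + x))‖ ≤ M ^ 2 / min (1 + l) 1 / ((k : ℝ) + 1) ^ 2 := by
  have hk0 : (0 : ℝ) ≤ (k : ℝ) := Nat.cast_nonneg k
  have hc : 0 < min (1 + l) 1 := lt_min (by linarith) one_pos
  set c := min (1 + l) 1 with hcdef
  have hc1 : c ≤ 1 := min_le_right _ _
  have hcl : c ≤ 1 + l := min_le_left _ _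
  have hck : c * (k : ℝ) ≤ (k : ℝ) := by nlinarith
  have hstep : c * ((k : ℝ) + 1) ≤ (k : ℝ) + 1 + x := by nlinarith
  have hden : c * ((k : ℝ) + 1) ^ 2 ≤ ((k : ℝ) + 1) * ((k : ℝ) + 1 + x) := by nlinarith
  have hdenpos : (0 : ℝ) < ((k : ℝ) + 1) * ((k : ℝ) + 1 + x) := by nlinarith
  have hxM2 := abs_le.mp hxM
  have hx2 : x ^ 2 ≤ M ^ 2 := sq_le_sq' (by linarith [hxM2.1]) hxM2.2
  rw [Real.norm_eq_abs, abs_of_nonneg (div_nonneg (sq_nonneg x) hdenpos.le), div_div]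
  exact div_le_div₀ (by nlinarith [abs_nonneg x]) hx2 (by positivity) hden

lemma hasDerivAt_Qsum {t : ℝ} (ht : -1 < t) :
    HasDerivAt (fun y => ∑' k : ℕ, Qterm k y) (Dfun t) t := by
  have hl : (-1 : ℝ) < (t - 1) / 2 := by linarith
  apply hasDerivAt_tsum_of_isPreconnected
    (u := fun k : ℕ => (|t| + 2) ^ 2 / min (1 + (t - 1) / 2) 1 / ((k : ℝ) + 1) ^ 2)
    (summable_base _) (isOpen_Ioo (a := (t - 1) / 2) (b := t + 1)) (isPreconnected_Ioo)
    (g := fun k y => Qterm k y)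
    (g' := fun k y => y ^ 2 / (((k : ℝ) + 1) * ((k : ℝ) + 1 + y)))
    (y₀ := t) ?_ ?_ ?_ ?_ ?_
  · intro k y hy
    obtain ⟨hy1, hy2⟩ := hy
    have hy0 : (-1 : ℝ) < y := lt_trans hl hy1
    have hk1 : (0 : ℝ) < (k : ℝ) + 1 := by positivity
    have hpos := one_add_div_pos hy0 k
    have h1 : HasDerivAt (fun y : ℝ => 1 + y / ((k : ℝ) + 1)) (1 / ((k : ℝ) + 1)) y := by
      simpa using ((hasDerivAt_id y).div_const ((k : ℝ) + 1)).const_add 1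
    have h2 := (((h1.log (ne_of_gt hpos)).const_mul ((k : ℝ) + 1)).add
      ((hasDerivAt_pow 2 y).div_const (2 * ((k : ℝ) + 1)))).sub (hasDerivAt_id y)
    have h3 : HasDerivAt (fun y => Qterm k y)
        (((k : ℝ) + 1) * (1 / ((k : ℝ) + 1) / (1 + y / ((k : ℝ) + 1)))
          + (2 : ℕ) * y ^ (2 - 1) / (2 * ((k : ℝ) + 1)) - 1) y := h2
    refine h3.congr_deriv ?_
    have hne : (0 : ℝ) < (k : ℝ) + 1 + y := by
      have := one_add_div_pos hy0 k
      nlinarith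
    field_simp
    ring
  · intro k y hy
    obtain ⟨hy1, hy2⟩ := hy
    have hyM : |y| ≤ |t| + 2 := by
      rw [abs_le]
      constructor
      · have h1 : -(|t| + 2) ≤ (t - 1) / 2 := by
          have := neg_abs_le t; have := abs_nonneg t; linarith
        linarith
      · have := le_abs_self t; linarith
    exact Dterm_bound hl hy1 hyM
  · exact ⟨by linarith, by linarith⟩
  · exact summable_Q t
  · exact ⟨by linarith, by linarith⟩

lemma hasDerivAt_L {t : ℝ} (ht : -1 < t) : HasDerivAt Lfun (Lp t) t := by
  have hq := hasDerivAt_Qsum ht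
  have hp : HasDerivAt (fun y : ℝ => y / 2 * Real.log (2 * Real.pi) - (y + y ^ 2 * (1 + γ)) / 2)
      (1 / 2 * Real.log (2 * Real.pi) - (1 + (2 : ℕ) * t ^ (2 - 1) * (1 + γ)) / 2) t := by
    exact (((hasDerivAt_id t).div_const 2).mul_const (Real.log (2 * Real.pi))).sub
      (((hasDerivAt_id t).add ((hasDerivAt_pow 2 t).mul_const (1 + γ))).div_const 2)
  have h := hp.add hq
  have he : Lfun = fun y => (y / 2 * Real.log (2 * Real.pi) - (y + y ^ 2 * (1 + γ)) / 2)
      + ∑' k : ℕ, Qterm k y := by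
    funext y; simp only [Lfun, Qfun]
  rw [he]
  refine h.congr_deriv ?_
  simp only [Lp]
  push_cast
  ring

lemma continuousOn_D {l R : ℝ} (hl : -1 < l) : ContinuousOn Dfun (Ioo l R) := by
  have : ContinuousOn (fun x => ∑' k : ℕ, x ^ 2 / (((k : ℝ) + 1) * ((k : ℝ) + 1 + x)))
      (Ioo l R) := by
    apply continuousOn_tsum
      (u := fun k : ℕ => (|l| + |R|) ^ 2 / min (1 + l) 1 / ((k : ℝ) + 1) ^ 2)
    · intro k
      apply ContinuousOn.div (by fun_prop) (by fun_prop)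
      intro x hx
      have hk0 : (0 : ℝ) ≤ (k : ℝ) := Nat.cast_nonneg k
      have : (0 : ℝ) < (k : ℝ) + 1 + x := by
        have := hx.1; linarith
      positivity
    · exact summable_base _
    · intro k x hx
      apply Dterm_bound hl hx.1
      rw [abs_le]
      constructor
      · have := neg_abs_le l; have := hx.1; have : (0:ℝ) ≤ |R| := abs_nonneg R
        linarith [neg_abs_le l, hx.1.le, abs_nonneg R]
      · linarith [le_abs_self R, hx.2.le, abs_nonneg l]
  exact this

lemma hasSum_telescope {t : ℝ} (ht : -1 < t) :
    HasSum (fun k : ℕ => 1 / ((k : ℝ) + 1 + t) - 1 / ((k : ℝ) + 2 + t)) (1 / (1 + t)) := by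
  have hpos : ∀ k : ℕ, 0 < (k : ℝ) + 1 + t := fun k => by
    have : (0 : ℝ) ≤ (k : ℝ) := Nat.cast_nonneg k; linarith
  rw [hasSum_iff_tendsto_nat_of_nonneg]
  · have h1 : ∀ n : ℕ, ∑ i ∈ Finset.range n, (1 / ((i : ℝ) + 1 + t) - 1 / ((i : ℝ) + 2 + t))
        = 1 / (1 + t) - 1 / ((n : ℝ) + 1 + t) := by
      intro n
      have h := Finset.sum_range_sub' (f := fun i : ℕ => 1 / ((i : ℝ) + 1 + t)) n
      simp only [Nat.cast_zero, zero_add] at h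
      rw [← h]
      apply Finset.sum_congr rfl
      intro i _
      push_cast
      ring_nf
    simp only [h1]
    have hb : Tendsto (fun n : ℕ => (n : ℝ) + 1 + t) atTop atTop := by
      have h0 := tendsto_natCast_atTop_atTop (R := ℝ)
      exact tendsto_atTop_add_const_right atTop t (tendsto_atTop_add_const_right atTop 1 h0)
    have h2 : Tendsto (fun n : ℕ => 1 / ((n : ℝ) + 1 + t)) atTop (𝓝 0) := by
      simp only [one_div]
      exact hb.inv_tendsto_atTop
    simpa using (tendsto_const_nhds (x := 1 / (1 + t))).sub h2
  · intro k
    have h1 := hpos k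
    have h2 : (0 : ℝ) < (k : ℝ) + 2 + t := by linarith
    have := one_div_le_one_div_of_le h1 (by linarith : (k : ℝ) + 1 + t ≤ (k : ℝ) + 2 + t)
    linarith

lemma psiR_shift {t : ℝ} (ht : -1 < t) : psiR (1 + t) + γ = Afun t := by
  have hA := (summable_A t).hasSum
  have hT := hasSum_telescope ht
  have hB := hA.add hT
  have hB' : HasSum (fun k : ℕ => 1 / ((k : ℝ) + 1) - 1 / ((k : ℝ) + 1 + (1 + t)))
      (Afun t + 1 / (1 + t)) := by
    apply HasSum.congr_fun hB
    intro k
    ring_nf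
  have hAt : Afun (1 + t) = Afun t + 1 / (1 + t) := hB'.tsum_eq
  simp only [psiR]
  rw [hAt]
  ring

lemma D_eq {t : ℝ} (ht : -1 < t) : Dfun t = t * (psiR (1 + t) + γ) := by
  rw [psiR_shift ht]
  simp only [Dfun, Afun]
  rw [← tsum_mul_left]
  apply tsum_congr
  intro k
  have hk0 : (0 : ℝ) ≤ (k : ℝ) := Nat.cast_nonneg k
  have h1 : (0 : ℝ) < (k : ℝ) + 1 + t := by linarith
  have h2 : (0 : ℝ) < (k : ℝ) + 1 := by linarith
  field_simp
  ring

end BarnesAux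


open BarnesAux in
/-- For `α > 0` and `|β| < 1 + α/2`,
`∫_0^β [(α/2) d/dx log(Γ(1+α/2-x)Γ(1+α/2+x)) + x d/dx log(Γ(1+α/2+x)/Γ(1+α/2-x)) - 2x] dx
  = log(G(1+α/2+β) G(1+α/2-β) / G(1+α/2)²)`. -/
theorem integral_Gamma_combination_eq_log_barnesG (α β : ℝ) (hα : 0 < α)
    (hβ : |β| < 1 + α / 2) :
    ∫ x in (0 : ℝ)..β,
        (α / 2 * deriv (fun y =>
            Real.log (Real.Gamma (1 + α / 2 - y) * Real.Gamma (1 + α / 2 + y))) x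
          + x * deriv (fun y =>
            Real.log (Real.Gamma (1 + α / 2 + y) / Real.Gamma (1 + α / 2 - y))) x
          - 2 * x)
      = Real.log (barnesG (1 + α / 2 + β) * barnesG (1 + α / 2 - β)
          / barnesG (1 + α / 2) ^ 2) := by
  obtain ⟨hβ1, hβ2⟩ := abs_lt.mp hβ
  have habs1 : β ≤ |β| := le_abs_self β
  have habs2 : -|β| ≤ β := neg_abs_le β
  have habs0 : 0 ≤ |β| := abs_nonneg β
  set γ' := Real.eulerMascheroniConstant with hγ'
  set F : ℝ → ℝ := fun x =>
      α / 2 * deriv (fun y =>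
            Real.log (Real.Gamma (1 + α / 2 - y) * Real.Gamma (1 + α / 2 + y))) x
          + x * deriv (fun y =>
            Real.log (Real.Gamma (1 + α / 2 + y) / Real.Gamma (1 + α / 2 - y))) x
          - 2 * x with hF
  set Φ : ℝ → ℝ := fun x => Lfun (α / 2 + x) + Lfun (α / 2 - x) with hΦdef
  set G : ℝ → ℝ := fun x => Lp (α / 2 + x) - Lp (α / 2 - x) with hGdef
  -- membership bounds
  have hxbound : ∀ x ∈ uIcc (0 : ℝ) β, -|β| ≤ x ∧ x ≤ |β| := by
    intro x hx
    rcases Set.mem_uIcc.mp hx with ⟨h1, h2⟩ | ⟨h1, h2⟩ <;> constructor <;> linarith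
  -- pointwise facts
  have main : ∀ x ∈ uIcc (0 : ℝ) β, HasDerivAt Φ (G x) x ∧ F x = G x := by
    intro x hx
    obtain ⟨hxl, hxr⟩ := hxbound x hx
    have hx1 : (-1 : ℝ) < α / 2 + x := by linarith
    have hx2 : (-1 : ℝ) < α / 2 - x := by linarith
    have hp : (0 : ℝ) < 1 + α / 2 + x := by linarith
    have hm : (0 : ℝ) < 1 + α / 2 - x := by linarith
    -- derivative of Φ
    have hL1 : HasDerivAt (fun y : ℝ => Lfun (α / 2 + y)) (Lp (α / 2 + x)) x := by
      have h0 := (hasDerivAt_L hx1).comp x ((hasDerivAt_id x).const_add (α / 2))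
      exact h0.congr_deriv (by simp)
    have hL2 : HasDerivAt (fun y : ℝ => Lfun (α / 2 - y)) (-Lp (α / 2 - x)) x := by
      have h0 := (hasDerivAt_L hx2).comp x (HasDerivAt.const_sub (α / 2) (hasDerivAt_id x))
      exact h0.congr_deriv (by simp)
    have hΦ : HasDerivAt Φ (G x) x := by
      have h := hL1.add hL2
      rw [hΦdef, hGdef]
      dsimp only
      have h2 : Lp (α / 2 + x) - Lp (α / 2 - x) = Lp (α / 2 + x) + -Lp (α / 2 - x) := by ring
      rw [h2]
      exact h
    refine ⟨hΦ, ?_⟩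
    -- derivatives of the log Gamma expressions
    have hplus : HasDerivAt (fun y : ℝ => Real.log (Real.Gamma (1 + α / 2 + y)))
        (psiR (1 + α / 2 + x)) x := by
      have h0 := (hasDerivAt_logGamma_s9 hp).comp x ((hasDerivAt_id x).const_add (1 + α / 2))
      exact h0.congr_deriv (by simp)
    have hminus : HasDerivAt (fun y : ℝ => Real.log (Real.Gamma (1 + α / 2 - y)))
        (-psiR (1 + α / 2 - x)) x := by
      have h0 := (hasDerivAt_logGamma_s9 hm).comp x (HasDerivAt.const_sub (1 + α / 2) (hasDerivAt_id x))
      exact h0.congr_deriv (by simp)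
    have e1 : ∀ᶠ y in nhds x, 0 < 1 + α / 2 - y := by
      have hc : Filter.Tendsto (fun y : ℝ => 1 + α / 2 - y) (nhds x) (nhds (1 + α / 2 - x)) :=
        Continuous.tendsto (by fun_prop) x
      exact hc.eventually (eventually_gt_nhds hm)
    have e2 : ∀ᶠ y in nhds x, 0 < 1 + α / 2 + y := by
      have hc : Filter.Tendsto (fun y : ℝ => 1 + α / 2 + y) (nhds x) (nhds (1 + α / 2 + x)) :=
        Continuous.tendsto (by fun_prop) x
      exact hc.eventually (eventually_gt_nhds hp)
    have hd1 : HasDerivAt (fun y : ℝ =>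
        Real.log (Real.Gamma (1 + α / 2 - y) * Real.Gamma (1 + α / 2 + y)))
        (-psiR (1 + α / 2 - x) + psiR (1 + α / 2 + x)) x := by
      apply (hminus.add hplus).congr_of_eventuallyEq
      filter_upwards [e1, e2] with y h1 h2
      exact Real.log_mul (Real.Gamma_pos_of_pos h1).ne' (Real.Gamma_pos_of_pos h2).ne'
    have hd2 : HasDerivAt (fun y : ℝ =>
        Real.log (Real.Gamma (1 + α / 2 + y) / Real.Gamma (1 + α / 2 - y)))
        (psiR (1 + α / 2 + x) - -psiR (1 + α / 2 - x)) x := by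
      apply (hplus.sub hminus).congr_of_eventuallyEq
      filter_upwards [e1, e2] with y h1 h2
      exact Real.log_div (Real.Gamma_pos_of_pos h2).ne' (Real.Gamma_pos_of_pos h1).ne'
    have hDp : Dfun (α / 2 + x) = (α / 2 + x) * (psiR (1 + α / 2 + x) + γ') := by
      rw [D_eq hx1, show (1 : ℝ) + (α / 2 + x) = 1 + α / 2 + x from by ring]
    have hDm : Dfun (α / 2 - x) = (α / 2 - x) * (psiR (1 + α / 2 - x) + γ') := by
      rw [D_eq hx2, show (1 : ℝ) + (α / 2 - x) = 1 + α / 2 - x from by ring]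
    have hLp : ∀ t, Lp t = Real.log (2 * Real.pi) / 2 - 1 / 2 - t * (1 + γ') + Dfun t :=
      fun t => rfl
    rw [hF, hGdef]
    dsimp only
    rw [hd1.deriv, hd2.deriv, hLp, hLp, hDp, hDm]
    ring
  -- integrability
  have hl : (-1 : ℝ) < (α / 2 - |β| - 1) / 2 := by linarith
  have hLpc : ContinuousOn Lp (Ioo ((α / 2 - |β| - 1) / 2) (α / 2 + |β| + 1)) := by
    have he : Lp = fun t => Real.log (2 * Real.pi) / 2 - 1 / 2 - t * (1 + γ') + Dfun t := rfl
    rw [he]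
    exact ContinuousOn.add (by fun_prop) (continuousOn_D hl)
  have hmaps1 : MapsTo (fun x : ℝ => α / 2 + x) (uIcc (0 : ℝ) β)
      (Ioo ((α / 2 - |β| - 1) / 2) (α / 2 + |β| + 1)) := by
    intro x hx
    obtain ⟨hxl, hxr⟩ := hxbound x hx
    exact ⟨by linarith, by linarith⟩
  have hmaps2 : MapsTo (fun x : ℝ => α / 2 - x) (uIcc (0 : ℝ) β)
      (Ioo ((α / 2 - |β| - 1) / 2) (α / 2 + |β| + 1)) := by
    intro x hx
    obtain ⟨hxl, hxr⟩ := hxbound x hx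
    exact ⟨by linarith, by linarith⟩
  have hGc : ContinuousOn G (uIcc (0 : ℝ) β) := by
    rw [hGdef]
    exact (hLpc.comp (Continuous.continuousOn (by fun_prop)) hmaps1).sub
      (hLpc.comp (Continuous.continuousOn (by fun_prop)) hmaps2)
  have hFc : ContinuousOn F (uIcc (0 : ℝ) β) :=
    hGc.congr (fun x hx => (main x hx).2)
  have hint : IntervalIntegrable F MeasureTheory.volume 0 β := hFc.intervalIntegrable
  have key := intervalIntegral.integral_eq_sub_of_hasDerivAt
    (f := Φ) (f' := F) (fun x hx => ((main x hx).2 ▸ (main x hx).1)) hint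
  rw [key]
  -- compute the right-hand side
  have hb1 : (-1 : ℝ) < α / 2 + β := by linarith
  have hb2 : (-1 : ℝ) < α / 2 - β := by linarith
  have hb0 : (-1 : ℝ) < α / 2 := by linarith
  have hG1 : barnesG (1 + α / 2 + β) = Real.exp (Lfun (α / 2 + β)) := by
    rw [show (1 : ℝ) + α / 2 + β = 1 + (α / 2 + β) from by ring]
    exact barnesG_eq_s9 hb1
  have hG2 : barnesG (1 + α / 2 - β) = Real.exp (Lfun (α / 2 - β)) := by
    rw [show (1 : ℝ) + α / 2 - β = 1 + (α / 2 - β) from by ring]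
    exact barnesG_eq_s9 hb2
  have hG0 : barnesG (1 + α / 2) = Real.exp (Lfun (α / 2)) := by
    rw [show (1 : ℝ) + α / 2 = 1 + (α / 2) from by ring]
    exact barnesG_eq_s9 hb0
  have hpow : Real.exp (Lfun (α / 2)) ^ 2 = Real.exp (2 * Lfun (α / 2)) := by
    rw [← Real.exp_nat_mul]
    norm_num
  rw [hG1, hG2, hG0, ← Real.exp_add, hpow, ← Real.exp_sub, Real.log_exp, hΦdef]
  dsimp only
  ring
end

section
/- (Heine/Andréief identity) Let w be an integrable function on an interval I ⊂ ℝ with all moments ∫_I |x|^m w(x) dx finite. Then for every n ≥ 1, det( ∫_I x^{j+k} w(x) dx )_{j,k=0}^{n-1} = (1/n!) ∫_{I^n} ∏_{1 ≤ j < k ≤ n} (x_k - x_j)^2 ∏_{j=1}^{n} w(x_j) dx_1 ... dx_n. -/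
open MeasureTheory Filter Set


lemma aux_pi_restrict (n : ℕ) (S : Set ℝ) (hS : MeasurableSet S) :
    (volume : Measure (Fin n → ℝ)).restrict (Set.univ.pi fun _ => S)
      = Measure.pi (fun _ : Fin n => volume.restrict S) := by
  symm
  apply Measure.pi_eq
  intro s hs
  rw [Measure.restrict_apply (MeasurableSet.univ_pi hs), ← Set.pi_inter_distrib,
    volume_pi, Measure.pi_pi]
  simp [Measure.restrict_apply (hs _)]

lemma aux_integrable_prod (μ : Measure ℝ) [SigmaFinite μ] :
    ∀ {n : ℕ} {f : Fin n → ℝ → ℝ}, (∀ i, Integrable (f i) μ) →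
      Integrable (fun x : Fin n → ℝ => ∏ i, f i (x i)) (Measure.pi fun _ => μ) := by
  intro n
  induction n with
  | zero =>
      intro f _
      simp only [Finset.univ_eq_empty, Finset.prod_empty]
      have : IsProbabilityMeasure (Measure.pi (fun _ : Fin 0 => μ)) := by
        constructor
        simp [Measure.pi_univ]
      exact integrable_const 1
  | succ n ih =>
      intro f hf
      have := ((measurePreserving_piFinSuccAbove (fun _ : Fin (n+1) => μ) 0).symm)
      rw [← this.integrable_comp_emb (MeasurableEquiv.measurableEmbedding _)]
      simp_rw [MeasurableEquiv.piFinSuccAbove_symm_apply, Fin.insertNthEquiv,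
        Fin.prod_univ_succ, Fin.insertNth_zero]
      simp only [Fin.zero_succAbove, Function.comp_def, Equiv.coe_fn_mk, Fin.cons_zero,
        Fin.cons_succ]
      have h2 : Integrable (fun (x : Fin n → ℝ) ↦ ∏ j, f (Fin.succ j) (x j))
          (Measure.pi fun _ => μ) := ih (fun i ↦ hf _)
      exact Integrable.mul_prod (hf 0) h2

lemma aux_integral_prod (μ : Measure ℝ) [SigmaFinite μ] :
    ∀ (n : ℕ) (f : Fin n → ℝ → ℝ),
      (∫ x : Fin n → ℝ, ∏ i, f i (x i) ∂(Measure.pi fun _ => μ)) = ∏ i, ∫ x, f i x ∂μ := by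
  intro n
  induction n with
  | zero =>
      intro f
      have : IsProbabilityMeasure (Measure.pi (fun _ : Fin 0 => μ)) := by
        constructor; simp [Measure.pi_univ]
      simp
  | succ n ih =>
      intro f
      calc
        _ = ∫ p : ℝ × (Fin n → ℝ), f 0 p.1 * ∏ i : Fin n, f (Fin.succ i) (p.2 i)
            ∂(μ.prod (Measure.pi fun _ => μ)) := by
          rw [← ((measurePreserving_piFinSuccAbove (fun _ : Fin (n+1) => μ) 0).symm).integral_comp']
          simp only [MeasurableEquiv.piFinSuccAbove_symm_apply, Fin.insertNthEquiv,
            Fin.prod_univ_succ, Fin.insertNth_zero, Equiv.coe_fn_mk, Fin.cons_succ,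
            Fin.zero_succAbove, Fin.cons_zero, Function.comp_def, cast_eq]
        _ = (∫ x, f 0 x ∂μ) * ∏ i : Fin n, ∫ x, f (Fin.succ i) x ∂μ := by
          rw [← ih, ← integral_prod_mul]
        _ = ∏ i, ∫ x, f i x ∂μ := by rw [Fin.prod_univ_succ]

section
variable {n : ℕ}

lemma aux_prod_pairs (f : Fin n × Fin n → ℝ) :
    (∏ q ∈ Finset.univ.filter (fun q : Fin n × Fin n => q.1 < q.2), f q)
      = ∏ i, ∏ j ∈ Finset.Ioi i, f (i, j) := by
  rw [Finset.prod_filter, ← Finset.univ_product_univ, Finset.prod_product]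
  refine Finset.prod_congr rfl fun i _ => ?_
  rw [← Finset.prod_filter]
  refine Finset.prod_congr ?_ fun j _ => rfl
  ext j
  simp

lemma aux_det_vandermonde (x : Fin n → ℝ) :
    Matrix.det (Matrix.vandermonde x)
      = ∑ σ : Equiv.Perm (Fin n), ((Equiv.Perm.sign σ : ℤ) : ℝ) *
          ∏ i, x i ^ ((σ⁻¹ i : Fin n) : ℕ) := by
  rw [Matrix.det_apply']
  refine Finset.sum_congr rfl fun σ _ => ?_
  congr 1
  have h := Equiv.prod_comp σ (fun i => x i ^ ((σ⁻¹ i : Fin n) : ℕ))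
  simp only [show ∀ i, σ⁻¹ (σ i) = i from fun i => σ.symm_apply_apply i] at h
  rw [← h]
  simp [Matrix.vandermonde_apply]

lemma aux_pointwise (w : ℝ → ℝ) (x : Fin n → ℝ) :
    (∏ q ∈ Finset.univ.filter (fun q : Fin n × Fin n => q.1 < q.2), (x q.2 - x q.1) ^ 2)
        * ∏ j, w (x j)
      = ∑ p : Equiv.Perm (Fin n) × Equiv.Perm (Fin n),
          (((Equiv.Perm.sign p.1 : ℤ) : ℝ) * ((Equiv.Perm.sign p.2 : ℤ) : ℝ)) *
            ∏ i, (x i ^ (((p.1⁻¹ i : Fin n) : ℕ) + ((p.2⁻¹ i : Fin n) : ℕ)) * w (x i)) := by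
  have h2 : (∏ q ∈ Finset.univ.filter (fun q : Fin n × Fin n => q.1 < q.2), (x q.2 - x q.1) ^ 2)
      = (Matrix.det (Matrix.vandermonde x)) ^ 2 := by
    rw [Finset.prod_pow, aux_prod_pairs (fun q => x q.2 - x q.1), Matrix.det_vandermonde]
  rw [h2, sq, aux_det_vandermonde, Finset.sum_mul_sum, Finset.sum_mul, Fintype.sum_prod_type]
  refine Finset.sum_congr rfl fun σ _ => ?_
  rw [Finset.sum_mul]
  refine Finset.sum_congr rfl fun τ _ => ?_
  have key : (∏ i, x i ^ ((σ⁻¹ i : Fin n) : ℕ)) * (∏ i, x i ^ ((τ⁻¹ i : Fin n) : ℕ))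
        * ∏ j, w (x j)
      = ∏ i, (x i ^ (((σ⁻¹ i : Fin n) : ℕ) + ((τ⁻¹ i : Fin n) : ℕ)) * w (x i)) := by
    rw [← Finset.prod_mul_distrib, ← Finset.prod_mul_distrib]
    exact Finset.prod_congr rfl fun i _ => by rw [pow_add]
  rw [← key]
  ring

lemma aux_sum_perms (M : Matrix (Fin n) (Fin n) ℝ) :
    (∑ p : Equiv.Perm (Fin n) × Equiv.Perm (Fin n),
        (((Equiv.Perm.sign p.1 : ℤ) : ℝ) * ((Equiv.Perm.sign p.2 : ℤ) : ℝ)) *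
          ∏ i, M (p.1⁻¹ i) (p.2⁻¹ i))
      = (n.factorial : ℝ) * M.det := by
  rw [Fintype.sum_prod_type]
  have hσ : ∀ σ : Equiv.Perm (Fin n),
      (∑ τ : Equiv.Perm (Fin n),
        (((Equiv.Perm.sign σ : ℤ) : ℝ) * ((Equiv.Perm.sign τ : ℤ) : ℝ)) *
          ∏ i, M (σ⁻¹ i) (τ⁻¹ i)) = M.det := by
    intro σ
    rw [← Matrix.det_transpose M, Matrix.det_apply']
    have hbij : Function.Bijective (fun π : Equiv.Perm (Fin n) => σ * π⁻¹) := by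
      constructor
      · intro a b hab
        exact inv_injective (mul_left_cancel hab)
      · intro τ
        exact ⟨(σ⁻¹ * τ)⁻¹, by group⟩
    refine (Fintype.sum_bijective _ hbij _ _ fun π => ?_).symm
    have hsign : ((Equiv.Perm.sign (σ * π⁻¹) : ℤ) : ℝ)
        = ((Equiv.Perm.sign σ : ℤ) : ℝ) * ((Equiv.Perm.sign π : ℤ) : ℝ) := by
      rw [Equiv.Perm.sign_mul, Equiv.Perm.sign_inv]
      push_cast
      ring
    have hP : (∏ i, M (σ⁻¹ i) ((σ * π⁻¹)⁻¹ i)) = ∏ i, M.transpose (π i) i := by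
      simp only [Matrix.transpose_apply, mul_inv_rev, inv_inv, Equiv.Perm.coe_mul,
        Function.comp_apply]
      exact Equiv.prod_comp σ⁻¹ (fun j => M j (π j))
    have hss : ((Equiv.Perm.sign σ : ℤ) : ℝ) * ((Equiv.Perm.sign σ : ℤ) : ℝ) = 1 := by
      rcases Int.units_eq_one_or (Equiv.Perm.sign σ) with h | h <;> simp [h]
    rw [hsign, hP]
    rw [show ((Equiv.Perm.sign σ : ℤ) : ℝ) * (((Equiv.Perm.sign σ : ℤ) : ℝ) *
      ((Equiv.Perm.sign π : ℤ) : ℝ)) = (((Equiv.Perm.sign σ : ℤ) : ℝ) *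
      ((Equiv.Perm.sign σ : ℤ) : ℝ)) * ((Equiv.Perm.sign π : ℤ) : ℝ) from by ring, hss, one_mul]
  rw [Finset.sum_congr rfl (fun σ _ => hσ σ), Finset.sum_const, Finset.card_univ,
    Fintype.card_perm, nsmul_eq_mul, Fintype.card_fin]
end


lemma aux_pair_null {m : ℕ} (μ : Measure ℝ) [SigmaFinite μ] [NullSingletonClass μ]
    (i j : Fin (m + 1)) (hij : j ≠ i) :
    Measure.pi (fun _ : Fin (m + 1) => μ) {y | y i = y j} = 0 := by
  obtain ⟨k, hk⟩ := Fin.exists_succAbove_eq hij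
  have mp := measurePreserving_piFinSuccAbove (fun _ : Fin (m + 1) => μ) i
  have hset : {y : Fin (m + 1) → ℝ | y i = y j}
      = (MeasurableEquiv.piFinSuccAbove (fun _ : Fin (m + 1) => ℝ) i) ⁻¹'
        {p : ℝ × (Fin m → ℝ) | p.1 = p.2 k} := by
    ext y
    simp only [Set.mem_preimage, Set.mem_setOf_eq, MeasurableEquiv.piFinSuccAbove_apply]
    rw [← hk]
    rfl
  rw [hset, ← MeasurableEquiv.map_apply, mp.map_eq]
  have hms : MeasurableSet {p : ℝ × (Fin m → ℝ) | p.1 = p.2 k} :=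
    measurableSet_eq_fun measurable_fst ((measurable_pi_apply k).comp measurable_snd)
  rw [Measure.measure_prod_null hms]
  refine Filter.Eventually.of_forall fun x => ?_
  simp only [Pi.zero_apply]
  have : (Prod.mk x ⁻¹' {p : ℝ × (Fin m → ℝ) | p.1 = p.2 k}) = {z : Fin m → ℝ | z k = x} := by
    ext z; simp [eq_comm]
  rw [this]
  exact Measure.pi_hyperplane (fun _ : Fin m => μ) k x

lemma aux_diag_null {m : ℕ} (μ : Measure ℝ) [SigmaFinite μ] [NullSingletonClass μ] :
    Measure.pi (fun _ : Fin m => μ) {y | ∃ i j : Fin m, i ≠ j ∧ y i = y j} = 0 := by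
  cases m with
  | zero =>
      convert measure_empty (μ := Measure.pi (fun _ : Fin 0 => μ))
      ext y
      simp only [Set.mem_setOf_eq, Set.mem_empty_iff_false, iff_false, not_exists]
      intro i
      exact absurd i.2 (by simp)
  | succ m =>
      refine measure_mono_null (fun y hy => ?_)
        (measure_iUnion_null fun p : Fin (m+1) × Fin (m+1) =>
          measure_iUnion_null fun hp : p.2 ≠ p.1 => aux_pair_null μ p.1 p.2 hp)
      obtain ⟨i, j, hij, hyij⟩ := hy
      exact Set.mem_iUnion.2 ⟨(i, j), Set.mem_iUnion.2 ⟨Ne.symm hij, hyij⟩⟩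

lemma aux_pi_pos (μ : Measure ℝ) [SigmaFinite μ] {A : Set ℝ} (hA : μ A ≠ 0) :
    ∀ m : ℕ, Measure.pi (fun _ : Fin m => μ) (Set.univ.pi fun _ => A) ≠ 0 := by
  intro m
  induction m with
  | zero =>
      have h1 : (Set.univ.pi fun _ : Fin 0 => A) = Set.univ := by
        ext y; simp
      rw [h1]
      have : IsProbabilityMeasure (Measure.pi (fun _ : Fin 0 => μ)) := by
        constructor; simp [Measure.pi_univ]
      simp
  | succ m ih =>
      intro h
      have mp := measurePreserving_piFinSuccAbove (fun _ : Fin (m + 1) => μ) 0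
      have hsub : (MeasurableEquiv.piFinSuccAbove (fun _ : Fin (m + 1) => ℝ) 0) ⁻¹'
          ((A : Set ℝ) ×ˢ (Set.univ.pi fun _ : Fin m => A)) ⊆ Set.univ.pi fun _ => A := by
        intro y hy
        simp only [Set.mem_preimage, Set.mem_prod, MeasurableEquiv.piFinSuccAbove_apply,
          Set.mem_pi, Set.mem_univ, forall_true_left, true_implies] at hy ⊢
        intro l
        rcases Fin.eq_zero_or_eq_succ l with rfl | ⟨l', rfl⟩
        · exact hy.1
        · have := hy.2 l'
          simpa [Fin.zero_succAbove, Fin.tail] using this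
      have hnull : (μ.prod (Measure.pi fun _ : Fin m => μ))
          ((A : Set ℝ) ×ˢ (Set.univ.pi fun _ : Fin m => A)) = 0 := by
        rw [← mp.map_eq, MeasurableEquiv.map_apply]
        exact measure_mono_null hsub h
      rw [Measure.prod_prod] at hnull
      rcases mul_eq_zero.1 hnull with h1 | h2
      · exact hA h1
      · exact ih h2

set_option maxHeartbeats 1000000 in
/-- Heine/Andréief identity: the Hankel determinant of moments of `w` equals
`(1/n!)` times the `n`-fold integral of the squared Vandermonde determinant
against `∏ w(x_j)`. -/
theorem heine_identity (S : Set ℝ) (hSmeas : MeasurableSet S) (w : ℝ → ℝ)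
    (hmom : ∀ m : ℕ, IntegrableOn (fun x => |x| ^ m * |w x|) S)
    (n : ℕ) (hn : 1 ≤ n) :
    Matrix.det (Matrix.of fun j k : Fin n =>
        ∫ x in S, x ^ ((j : ℕ) + (k : ℕ)) * w x)
      = (1 / (n.factorial : ℝ)) *
          ∫ x : Fin n → ℝ in Set.univ.pi (fun _ => S),
            (∏ q ∈ Finset.univ.filter (fun q : Fin n × Fin n => q.1 < q.2),
              (x q.2 - x q.1) ^ 2) * ∏ j, w (x j) := by
  classical
  have hn' : Nonempty (Fin n) := ⟨⟨0, hn⟩⟩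
  have hfac : (n.factorial : ℝ) ≠ 0 := Nat.cast_ne_zero.2 (Nat.factorial_ne_zero n)
  by_cases hw : AEStronglyMeasurable w (volume.restrict S)
  · -- measurable case
    have hInt : ∀ m : ℕ, Integrable (fun x : ℝ => x ^ m * w x) (volume.restrict S) := by
      intro m
      refine Integrable.mono' (hmom m)
        (((measurable_id.pow_const m).aestronglyMeasurable).mul hw) ?_
      filter_upwards with x
      rw [Real.norm_eq_abs, abs_mul, abs_pow]
    have hRHS : (∫ x : Fin n → ℝ in Set.univ.pi (fun _ => S),
          (∏ q ∈ Finset.univ.filter (fun q : Fin n × Fin n => q.1 < q.2),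
            (x q.2 - x q.1) ^ 2) * ∏ j, w (x j))
        = (n.factorial : ℝ) * Matrix.det (Matrix.of fun j k : Fin n =>
            ∫ x in S, x ^ ((j : ℕ) + (k : ℕ)) * w x) := by
      rw [show ∫ x : Fin n → ℝ in Set.univ.pi (fun _ => S),
            (∏ q ∈ Finset.univ.filter (fun q : Fin n × Fin n => q.1 < q.2),
              (x q.2 - x q.1) ^ 2) * ∏ j, w (x j)
          = ∫ x : Fin n → ℝ,
            ((∏ q ∈ Finset.univ.filter (fun q : Fin n × Fin n => q.1 < q.2),
              (x q.2 - x q.1) ^ 2) * ∏ j, w (x j))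
            ∂(Measure.pi (fun _ : Fin n => volume.restrict S)) from by
        rw [← aux_pi_restrict n S hSmeas]]
      simp only [aux_pointwise w]
      have hint : ∀ p : Equiv.Perm (Fin n) × Equiv.Perm (Fin n), p ∈ (Finset.univ :
            Finset (Equiv.Perm (Fin n) × Equiv.Perm (Fin n))) →
          Integrable (fun x : Fin n → ℝ =>
            (((Equiv.Perm.sign p.1 : ℤ) : ℝ) * ((Equiv.Perm.sign p.2 : ℤ) : ℝ)) *
              ∏ i, (x i ^ (((p.1⁻¹ i : Fin n) : ℕ) + ((p.2⁻¹ i : Fin n) : ℕ)) * w (x i)))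
            (Measure.pi (fun _ : Fin n => volume.restrict S)) := by
        intro p _
        have h1 := aux_integrable_prod (volume.restrict S)
          (f := fun i => fun t : ℝ =>
            t ^ (((p.1⁻¹ i : Fin n) : ℕ) + ((p.2⁻¹ i : Fin n) : ℕ)) * w t)
          (fun i => hInt _)
        exact h1.const_mul _
      rw [integral_finset_sum _ hint]
      rw [← aux_sum_perms (Matrix.of fun j k : Fin n => ∫ x in S, x ^ ((j : ℕ) + (k : ℕ)) * w x)]
      refine Finset.sum_congr rfl fun p _ => ?_
      rw [MeasureTheory.integral_const_mul]
      congr 1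
      have h2 := aux_integral_prod (volume.restrict S) n
        (fun i => fun t : ℝ => t ^ (((p.1⁻¹ i : Fin n) : ℕ) + ((p.2⁻¹ i : Fin n) : ℕ)) * w t)
      rw [h2]
      simp only [Matrix.of_apply]
    rw [hRHS, one_div, inv_mul_cancel_left₀ hfac]
  · -- non-measurable case: both sides are zero
    have hzero : ∀ m : ℕ, (∫ x in S, x ^ m * w x) = 0 := by
      intro m
      refine integral_undef fun hInt => hw ?_
      have h2 : AEStronglyMeasurable (fun x : ℝ => (x ^ m * w x) * (x⁻¹) ^ m)
          (volume.restrict S) :=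
        hInt.1.mul ((measurable_inv.pow_const m).aestronglyMeasurable)
      refine h2.congr ?_
      have h0 : ∀ᵐ x ∂(volume.restrict S), x ≠ (0 : ℝ) := by
        refine (ae_iff).2 ?_
        have : {x : ℝ | ¬ x ≠ 0} = {0} := by ext u; simp
        rw [this]
        exact measure_singleton 0
      filter_upwards [h0] with x hx
      rw [mul_comm (x ^ m) (w x), mul_assoc, ← mul_pow, mul_inv_cancel₀ hx, one_pow, mul_one]
    have hM0 : (Matrix.of fun j k : Fin n => ∫ x in S, x ^ ((j : ℕ) + (k : ℕ)) * w x)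
        = (0 : Matrix (Fin n) (Fin n) ℝ) := by
      ext j k
      exact hzero _
    have hRHS0 : (∫ x : Fin n → ℝ in Set.univ.pi (fun _ => S),
          (∏ q ∈ Finset.univ.filter (fun q : Fin n × Fin n => q.1 < q.2),
            (x q.2 - x q.1) ^ 2) * ∏ j, w (x j)) = 0 := by
      rw [show ∫ x : Fin n → ℝ in Set.univ.pi (fun _ => S),
            (∏ q ∈ Finset.univ.filter (fun q : Fin n × Fin n => q.1 < q.2),
              (x q.2 - x q.1) ^ 2) * ∏ j, w (x j)
          = ∫ x : Fin n → ℝ,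
            ((∏ q ∈ Finset.univ.filter (fun q : Fin n × Fin n => q.1 < q.2),
              (x q.2 - x q.1) ^ 2) * ∏ j, w (x j))
            ∂(Measure.pi (fun _ : Fin n => volume.restrict S)) from by
        rw [← aux_pi_restrict n S hSmeas]]
      refine integral_undef fun hF => hw ?_
      obtain ⟨m, rfl⟩ : ∃ m, n = m + 1 := ⟨n - 1, (Nat.succ_pred_eq_of_pos hn).symm⟩
      set μ : Measure ℝ := volume.restrict S with hμ
      set F : (Fin (m + 1) → ℝ) → ℝ := fun x =>
        (∏ q ∈ Finset.univ.filter (fun q : Fin (m + 1) × Fin (m + 1) => q.1 < q.2),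
          (x q.2 - x q.1) ^ 2) * ∏ j, w (x j) with hFdef
      set e := MeasurableEquiv.piFinSuccAbove (fun _ : Fin (m + 1) => ℝ) 0 with he
      have mp := measurePreserving_piFinSuccAbove (fun _ : Fin (m + 1) => μ) 0
      have hF' : Integrable (F ∘ e.symm) (μ.prod (Measure.pi fun _ : Fin m => μ)) := by
        rw [(mp.symm e).integrable_comp_emb (MeasurableEquiv.measurableEmbedding _)]
        exact hF
      have hslice := hF'.prod_left_ae
      have hdist : ∀ᵐ y ∂(Measure.pi fun _ : Fin m => μ),
          ∀ i j : Fin m, i ≠ j → y i ≠ y j := by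
        refine (ae_iff).2 ?_
        have hset : {y : Fin m → ℝ | ¬ ∀ i j : Fin m, i ≠ j → y i ≠ y j}
            = {y | ∃ i j : Fin m, i ≠ j ∧ y i = y j} := by
          ext y
          simp [not_forall, Classical.not_imp, not_not]
        rw [hset]
        exact aux_diag_null μ
      have hA : μ {t : ℝ | w t ≠ 0} ≠ 0 := by
        intro h0
        refine hw ((aestronglyMeasurable_const (b := (0 : ℝ))).congr ?_)
        refine (ae_iff).2 ?_
        have : {x : ℝ | ¬ (0 : ℝ) = w x} = {t : ℝ | w t ≠ 0} := by
          ext t; simp [eq_comm]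
        rw [this]
        exact h0
      have hGood := aux_pi_pos μ hA m
      obtain ⟨y, hyA, hyInt, hyDist⟩ : ∃ y, y ∈ (Set.univ.pi fun _ : Fin m => {t : ℝ | w t ≠ 0})
          ∧ (Integrable (fun t => (F ∘ e.symm) (t, y)) μ
              ∧ ∀ i j : Fin m, i ≠ j → y i ≠ y j) := by
        by_contra hc
        push_neg at hc
        refine hGood (measure_mono_null (fun y hy => ?_) ((ae_iff).1 (hslice.and hdist)))
        intro hand
        obtain ⟨i, j, hij, heq⟩ := hc y hy hand.1
        exact hand.2 i j hij heq
      have hyA' : ∀ j, w (y j) ≠ 0 := fun j => hyA j (Set.mem_univ j)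
      set c : ℝ := ∏ j, w (y j) with hcdef
      have hc0 : c ≠ 0 := Finset.prod_ne_zero_iff.2 fun j _ => hyA' j
      set P : ℝ → ℝ := fun t =>
        ∏ q ∈ Finset.univ.filter (fun q : Fin (m + 1) × Fin (m + 1) => q.1 < q.2),
          ((Fin.cons t y : Fin (m + 1) → ℝ) q.2 - (Fin.cons t y : Fin (m + 1) → ℝ) q.1) ^ 2
        with hPdef
      have hsliceq : ∀ t : ℝ, (F ∘ e.symm) (t, y) = P t * w t * c := by
        intro t
        have hesymm : e.symm (t, y) = Fin.cons t y := by
          rw [he]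
          simp only [MeasurableEquiv.piFinSuccAbove_symm_apply, Fin.insertNthEquiv,
            Equiv.coe_fn_mk, Fin.insertNth_zero, cast_eq]
        rw [Function.comp_apply, hesymm, hFdef]
        show P t * (∏ j : Fin (m + 1), w ((Fin.cons t y : Fin (m + 1) → ℝ) j)) = P t * w t * c
        rw [Fin.prod_univ_succ]
        simp only [Fin.cons_zero, Fin.cons_succ]
        rw [← hcdef]
        ring
      have hPmeas : Measurable P := by
        refine Finset.measurable_prod _ fun q _ => ?_
        have h1 : ∀ k : Fin (m + 1), Measurable (fun t => (Fin.cons t y : Fin (m + 1) → ℝ) k) := by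
          intro k
          refine Fin.cases ?_ ?_ k
          · simpa using measurable_id'
          · intro l
            simpa using measurable_const
        exact ((h1 q.2).sub (h1 q.1)).pow_const 2
      have hP0 : ∀ t : ℝ, (∀ j, t ≠ y j) → P t ≠ 0 := by
        intro t ht
        refine Finset.prod_ne_zero_iff.2 fun q hq => ?_
        rw [Finset.mem_filter] at hq
        have hlt := hq.2
        refine pow_ne_zero _ (sub_ne_zero_of_ne ?_)
        rcases Fin.eq_zero_or_eq_succ q.1 with h1 | ⟨a, ha⟩
        · rcases Fin.eq_zero_or_eq_succ q.2 with h2 | ⟨b, hb⟩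
          · rw [h1, h2] at hlt; exact absurd hlt (lt_irrefl _)
          · rw [h1, hb]
            simp only [Fin.cons_zero, Fin.cons_succ]
            exact fun hcontr => ht b hcontr.symm
        · rcases Fin.eq_zero_or_eq_succ q.2 with h2 | ⟨b, hb⟩
          · rw [h2, ha] at hlt
            exact absurd hlt (Fin.not_lt_zero _)
          · rw [ha, hb]
            simp only [Fin.cons_succ]
            have hab : a ≠ b := by
              rintro rfl
              rw [ha, hb] at hlt
              exact lt_irrefl _ hlt
            exact hyDist b a hab.symm
      have hZ : ∀ᵐ t ∂μ, P t ≠ 0 := by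
        have h1 : ∀ᵐ t ∂μ, ∀ j, t ≠ y j := by
          rw [MeasureTheory.ae_all_iff]
          intro j
          refine (ae_iff).2 ?_
          have : {t : ℝ | ¬ t ≠ y j} = {y j} := by ext u; simp
          rw [this]
          exact measure_singleton _
        filter_upwards [h1] with t ht using hP0 t ht
      have h2 : AEStronglyMeasurable
          (fun t => ((F ∘ e.symm) (t, y)) * ((P t)⁻¹ * c⁻¹)) μ :=
        hyInt.1.mul ((hPmeas.inv.mul_const _).aestronglyMeasurable)
      refine h2.congr ?_
      filter_upwards [hZ] with t ht
      rw [hsliceq t]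
      field_simp
    rw [hM0, Matrix.det_zero, hRHS0, mul_zero]
end
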